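/- arXiv:2406.06831 — 8 statements merged into one kernel-verified Lean document; each statement's English description precedes it below -/
import Mathlib

section
/- Let v : ℝ → ℝ be twice continuously differentiable, 2π-periodic and everywhere positive, and define G : ℝ² → ℝ by G(w) = r²/v(θ)² whenever w = r·(cos θ, sin θ) with r > 0 (and G(0) = 0). For w = r·(cos θ, sin θ) with r > 0, let e_θ = (−sin θ, cos θ). Then the fundamental tensor g_w(u₁,u₂) := (1/2)·∂²/∂s∂t [G(w + s·u₁ + t·u₂)]|_{s=t=0} satisfies g_w(e_θ, e_θ) = (1/v(θ)²)·(3·v'(θ)²/v(θ)² − v''(θ)/v(θ) + 1). -/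
/-- The fundamental tensor of `G = F²` at `w`, evaluated on `u₁, u₂`:
`g_w(u₁,u₂) = (1/2) ∂²/∂s∂t [G(w + s u₁ + t u₂)] |_{s=t=0}`. -/
noncomputable def fundTensor (G : ℝ × ℝ → ℝ) (w u₁ u₂ : ℝ × ℝ) : ℝ :=
  (1 / 2) * deriv (fun s : ℝ => deriv (fun t : ℝ => G (w + s • u₁ + t • u₂)) 0) 0

/-- `g_w(e_θ, e_θ) = (1/v(θ)²)(3 v'(θ)²/v(θ)² − v''(θ)/v(θ) + 1)`. -/
theorem fundTensor_etheta_etheta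
    (v : ℝ → ℝ) (hv : ContDiff ℝ 2 v) (hper : ∀ θ, v (θ + 2 * Real.pi) = v θ)
    (hpos : ∀ θ, 0 < v θ) (G : ℝ × ℝ → ℝ)
    (hG : ∀ r θ : ℝ, 0 < r → G (r * Real.cos θ, r * Real.sin θ) = r ^ 2 / (v θ) ^ 2)
    (hG0 : G 0 = 0) :
    ∀ r θ : ℝ, 0 < r →
      fundTensor G (r * Real.cos θ, r * Real.sin θ)
        (-Real.sin θ, Real.cos θ) (-Real.sin θ, Real.cos θ) =
        (1 / (v θ) ^ 2) *
          (3 * (deriv v θ) ^ 2 / (v θ) ^ 2 - deriv (deriv v) θ / v θ + 1) := by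
  intro r θ hr
  have hrne : r ≠ 0 := hr.ne'
  have hr2 : ∀ u : ℝ, (0:ℝ) < r ^ 2 + u ^ 2 := fun u => by positivity
  have hVpos : 0 < v θ := hpos θ
  have hvd : Differentiable ℝ v := hv.differentiable (by norm_num)
  have hdvd : Differentiable ℝ (deriv v) := by
    have hv' : ContDiff ℝ (1+1) v := by norm_num; exact hv
    exact (contDiff_succ_iff_deriv.mp hv').2.2.differentiable (by norm_num)
  have hrr : r / (r ^ 2 + 0 ^ 2) = 1 / r := by
    rw [show r ^ 2 + 0 ^ 2 = r * r by ring, ← div_div, div_self hrne]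
  set φ : ℝ → ℝ := fun u => θ + Real.arctan (u / r) with hφdef
  have hφ0 : φ 0 = θ := by simp [hφdef]
  have hφd : ∀ u, HasDerivAt φ (r / (r ^ 2 + u ^ 2)) u := by
    intro u
    have h1 : HasDerivAt (fun u : ℝ => u / r) (1 / r) u := by
      simpa using (hasDerivAt_id u).div_const r
    have h2 := (Real.hasDerivAt_arctan (u / r)).comp u h1
    have h3 := h2.const_add θ
    refine h3.congr_deriv (Eq.symm ?_)
    rw [div_eq_iff (hr2 u).ne']
    field_simp
  set h : ℝ → ℝ := fun u => (r ^ 2 + u ^ 2) / (v (φ u)) ^ 2 with hhdef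
  have hvφ : ∀ u, HasDerivAt (fun u => v (φ u)) (deriv v (φ u) * (r / (r ^ 2 + u ^ 2))) u :=
    fun u => ((hvd (φ u)).hasDerivAt).comp u (hφd u)
  have hvφne : ∀ u, v (φ u) ≠ 0 := fun u => (hpos (φ u)).ne'
  set h' : ℝ → ℝ := fun u => 2 * u / (v (φ u)) ^ 2 - 2 * r * deriv v (φ u) / (v (φ u)) ^ 3
    with hh'def
  have hhd : ∀ u, HasDerivAt h (h' u) u := by
    intro u
    have hnum : HasDerivAt (fun u : ℝ => r ^ 2 + u ^ 2) (2 * u) u := by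
      simpa using (hasDerivAt_pow 2 u).const_add (r ^ 2)
    have hden : HasDerivAt (fun u => (v (φ u)) ^ 2)
        (2 * (v (φ u)) ^ 1 * (deriv v (φ u) * (r / (r ^ 2 + u ^ 2)))) u := (hvφ u).pow 2
    have hdiv := hnum.div hden (pow_ne_zero 2 (hvφne u))
    refine hdiv.congr_deriv (Eq.symm ?_)
    have hW : v (φ u) ≠ 0 := hvφne u
    show 2 * u / (v (φ u)) ^ 2 - 2 * r * deriv v (φ u) / (v (φ u)) ^ 3 = _
    generalize v (φ u) = W at hW ⊢
    generalize deriv v (φ u) = W'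
    field_simp
  have hderivh : deriv h = h' := funext fun u => (hhd u).deriv
  set D : ℝ := 2 / (v θ) ^ 2 - 2 * deriv (deriv v) θ / (v θ) ^ 3
      + 6 * (deriv v θ) ^ 2 / (v θ) ^ 4 with hDdef
  have hh'd : HasDerivAt h' D 0 := by
    have hvφ0 : HasDerivAt (fun u => v (φ u)) (deriv v θ * (1 / r)) 0 := by
      have h1 := hvφ 0
      rw [hφ0, hrr] at h1; exact h1
    have hf1 : HasDerivAt (fun u : ℝ => 2 * u / (v (φ u)) ^ 2) (2 / (v θ) ^ 2) 0 := by
      have hnum : HasDerivAt (fun u : ℝ => 2 * u) 2 0 := by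
        simpa using (hasDerivAt_id (0:ℝ)).const_mul 2
      have hden : HasDerivAt (fun u => (v (φ u)) ^ 2)
          (2 * (v (φ 0)) ^ 1 * (deriv v θ * (1 / r))) 0 := hvφ0.pow 2
      have hdiv := hnum.div hden (pow_ne_zero 2 (hvφne 0))
      refine hdiv.congr_deriv (Eq.symm ?_)
      rw [hφ0]
      field_simp
      all_goals ring
    have hdvφ0 : HasDerivAt (fun u => deriv v (φ u)) (deriv (deriv v) θ * (1 / r)) 0 := by
      have h1 : HasDerivAt (fun u => deriv v (φ u))
          (deriv (deriv v) (φ 0) * (r / (r ^ 2 + 0 ^ 2))) 0 :=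
        ((hdvd (φ 0)).hasDerivAt).comp 0 (hφd 0)
      rw [hφ0, hrr] at h1; exact h1
    have hf2 : HasDerivAt (fun u : ℝ => 2 * r * deriv v (φ u) / (v (φ u)) ^ 3)
        (2 * deriv (deriv v) θ / (v θ) ^ 3 - 6 * (deriv v θ) ^ 2 / (v θ) ^ 4) 0 := by
      have hnum : HasDerivAt (fun u : ℝ => 2 * r * deriv v (φ u))
          (2 * r * (deriv (deriv v) θ * (1 / r))) 0 := hdvφ0.const_mul (2 * r)
      have hden : HasDerivAt (fun u => (v (φ u)) ^ 3)
          (3 * (v (φ 0)) ^ 2 * (deriv v θ * (1 / r))) 0 := hvφ0.pow 3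
      have hdiv := hnum.div hden (pow_ne_zero 3 (hvφne 0))
      refine hdiv.congr_deriv (Eq.symm ?_)
      rw [hφ0]
      field_simp
      all_goals ring
    have hsub := hf1.sub hf2
    rw [hDdef]
    refine hsub.congr_deriv (Eq.symm ?_)
    ring
  -- trigonometric identities
  have hsqrtpos : ∀ u : ℝ, 0 < Real.sqrt (r ^ 2 + u ^ 2) := fun u => Real.sqrt_pos.mpr (hr2 u)
  have hsqrtform : ∀ u : ℝ, Real.sqrt (1 + (u / r) ^ 2) = Real.sqrt (r ^ 2 + u ^ 2) / r := by
    intro u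
    rw [show (1 : ℝ) + (u / r) ^ 2 = (r ^ 2 + u ^ 2) / r ^ 2 by field_simp; all_goals ring,
      Real.sqrt_div (hr2 u).le, Real.sqrt_sq hr.le]
  have hcos : ∀ u : ℝ, Real.cos (Real.arctan (u / r)) = r / Real.sqrt (r ^ 2 + u ^ 2) := by
    intro u
    rw [Real.cos_arctan, hsqrtform u, one_div_div]
  have hsin : ∀ u : ℝ, Real.sin (Real.arctan (u / r)) = u / Real.sqrt (r ^ 2 + u ^ 2) := by
    intro u
    rw [Real.sin_arctan, hsqrtform u]
    field_simp
  have key : ∀ u : ℝ, G (r * Real.cos θ - u * Real.sin θ, r * Real.sin θ + u * Real.cos θ)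
      = h u := by
    intro u
    have hR := hsqrtpos u
    have h1 : Real.sqrt (r ^ 2 + u ^ 2) * Real.cos (φ u) = r * Real.cos θ - u * Real.sin θ := by
      rw [hφdef]
      show Real.sqrt (r ^ 2 + u ^ 2) * Real.cos (θ + Real.arctan (u / r)) = _
      rw [Real.cos_add, hcos u, hsin u]
      field_simp
    have h2 : Real.sqrt (r ^ 2 + u ^ 2) * Real.sin (φ u) = r * Real.sin θ + u * Real.cos θ := by
      rw [hφdef]
      show Real.sqrt (r ^ 2 + u ^ 2) * Real.sin (θ + Real.arctan (u / r)) = _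
      rw [Real.sin_add, hcos u, hsin u]
      field_simp
    rw [← h1, ← h2, hG _ _ hR, Real.sq_sqrt (hr2 u).le]
  -- reduce fundTensor to derivatives of h
  have hpoint : ∀ s t : ℝ, ((r * Real.cos θ, r * Real.sin θ) : ℝ × ℝ)
      + s • (-Real.sin θ, Real.cos θ) + t • (-Real.sin θ, Real.cos θ)
      = (r * Real.cos θ - (s + t) * Real.sin θ, r * Real.sin θ + (s + t) * Real.cos θ) := by
    intro s t
    simp [Prod.ext_iff, Prod.smul_def]
    constructor <;> ring
  have houter : (fun s : ℝ => deriv (fun t : ℝ =>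
      G (((r * Real.cos θ, r * Real.sin θ) : ℝ × ℝ) + s • (-Real.sin θ, Real.cos θ)
        + t • (-Real.sin θ, Real.cos θ))) 0) = fun s => deriv h s := by
    funext s
    have : (fun t : ℝ => G (((r * Real.cos θ, r * Real.sin θ) : ℝ × ℝ)
        + s • (-Real.sin θ, Real.cos θ) + t • (-Real.sin θ, Real.cos θ)))
        = fun t => h (s + t) := by
      funext t
      rw [hpoint s t, key (s + t)]
    rw [this, deriv_comp_const_add h s 0, add_zero]
  rw [fundTensor, houter]
  have : deriv (fun s => deriv h s) 0 = D := by
    rw [show (fun s => deriv h s) = h' from hderivh, hh'd.deriv]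
  rw [this, hDdef]
  field_simp
  ring
end

section
/- Let v : ℝ → ℝ be twice continuously differentiable, 2π-periodic and everywhere positive, and define G : ℝ² → ℝ by G(w) = r²/v(θ)² whenever w = r·(cos θ, sin θ) with r > 0 (and G(0) = 0). Fix θ and let w = v(θ)·(cos θ, sin θ) be the point of the indicatrix in direction θ, and let T = v'(θ)·(cos θ, sin θ) + v(θ)·(−sin θ, cos θ) be the tangent vector to the indicatrix curve at w. Then the fundamental tensor g_w(u₁,u₂) := (1/2)·∂²/∂s∂t [G(w + s·u₁ + t·u₂)]|_{s=t=0} satisfies g_w(T, T) = 2·v'(θ)²/v(θ)² − v''(θ)/v(θ) + 1. -/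
open Real


noncomputable def ang (v : ℝ → ℝ) (θ u : ℝ) : ℝ :=
  Real.arctan (u * v θ / (v θ + u * deriv v θ))

noncomputable def NN (v : ℝ → ℝ) (θ u : ℝ) : ℝ :=
  (v θ + u * deriv v θ) ^ 2 + (u * v θ) ^ 2

noncomputable def FF (v : ℝ → ℝ) (θ u : ℝ) : ℝ :=
  NN v θ u / (v (θ + ang v θ u)) ^ 2

noncomputable def FF' (v : ℝ → ℝ) (θ u : ℝ) : ℝ :=
  (2 * deriv v θ * (v θ + u * deriv v θ) + 2 * u * (v θ) ^ 2) / (v (θ + ang v θ u)) ^ 2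
    - 2 * (v θ) ^ 2 * deriv v (θ + ang v θ u) / (v (θ + ang v θ u)) ^ 3

lemma NN_pos (v : ℝ → ℝ) (θ u : ℝ) (hu : 0 < v θ + u * deriv v θ) : 0 < NN v θ u := by
  have h1 := pow_pos hu 2
  have h2 := sq_nonneg (u * v θ)
  unfold NN; positivity

lemma hasDerivAt_ang (v : ℝ → ℝ) (θ u : ℝ) (hu : 0 < v θ + u * deriv v θ) :
    HasDerivAt (ang v θ) ((v θ) ^ 2 / NN v θ u) u := by
  set a := v θ with ha; set b := deriv v θ with hb
  have hq : HasDerivAt (fun u => u * a / (a + u * b))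
      ((1 * a * (a + u * b) - u * a * (1 * b)) / (a + u * b) ^ 2) u := by
    exact (((hasDerivAt_id u).mul_const a).div
      (((hasDerivAt_id u).mul_const b).const_add a) hu.ne')
  have h := (Real.hasDerivAt_arctan (u * a / (a + u * b))).comp u hq
  have hN : 0 < NN v θ u := NN_pos v θ u hu
  have hang : ang v θ = Real.arctan ∘ (fun u => u * a / (a + u * b)) := rfl
  rw [hang]
  refine h.congr_deriv ?_
  have h1 : (1 : ℝ) + (u * a / (a + u * b)) ^ 2 = NN v θ u / (a + u * b) ^ 2 := by
    field_simp [NN, ← ha, ← hb]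
    rw [NN, ← ha, ← hb]; ring
  rw [h1]
  field_simp
  ring

lemma hasDerivAt_FF (v : ℝ → ℝ) (hv1 : Differentiable ℝ v) (hpos : ∀ θ, 0 < v θ)
    (θ u : ℝ) (hu : 0 < v θ + u * deriv v θ) :
    HasDerivAt (FF v θ) (FF' v θ u) u := by
  set a := v θ with ha; set b := deriv v θ with hb
  have hN : 0 < NN v θ u := NN_pos v θ u hu
  have hVpos : 0 < v (θ + ang v θ u) := hpos _
  have hang := hasDerivAt_ang v θ u hu
  have hinner : HasDerivAt (fun u => θ + ang v θ u) (a ^ 2 / NN v θ u) u :=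
    hang.const_add θ
  have hV : HasDerivAt (fun u => v (θ + ang v θ u))
      (deriv v (θ + ang v θ u) * (a ^ 2 / NN v θ u)) u :=
    (hv1 _).hasDerivAt.comp u hinner
  have hNd : HasDerivAt (fun u => NN v θ u)
      ((2 : ℕ) * (a + u * b) ^ 1 * (1 * b) + (2 : ℕ) * (u * a) ^ 1 * (1 * a)) u := by
    have h1 : HasDerivAt (fun u : ℝ => (a + u * b) ^ 2)
        ((2 : ℕ) * (a + u * b) ^ 1 * (1 * b)) u :=
      (((hasDerivAt_id u).mul_const b).const_add a).pow 2
    have h2 : HasDerivAt (fun u : ℝ => (u * a) ^ 2)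
        ((2 : ℕ) * (u * a) ^ 1 * (1 * a)) u :=
      ((hasDerivAt_id u).mul_const a).pow 2
    exact h1.add h2
  have hV2 : HasDerivAt (fun u => (v (θ + ang v θ u)) ^ 2)
      ((2 : ℕ) * (v (θ + ang v θ u)) ^ 1 * (deriv v (θ + ang v θ u) * (a ^ 2 / NN v θ u))) u :=
    hV.pow 2
  have h := hNd.div hV2 (pow_ne_zero 2 hVpos.ne')
  refine h.congr_deriv ?_
  unfold FF'
  rw [← ha, ← hb]
  field_simp
  ring

lemma polar_eq (v : ℝ → ℝ) (θ u : ℝ) (hu : 0 < v θ + u * deriv v θ) :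
    v θ • ((Real.cos θ, Real.sin θ) : ℝ × ℝ)
      + u • (deriv v θ • ((Real.cos θ, Real.sin θ) : ℝ × ℝ)
          + v θ • ((-Real.sin θ, Real.cos θ) : ℝ × ℝ)) =
    (Real.sqrt (NN v θ u) * Real.cos (θ + ang v θ u),
     Real.sqrt (NN v θ u) * Real.sin (θ + ang v θ u)) := by
  set a := v θ with ha; set b := deriv v θ with hb
  have hN : 0 < NN v θ u := NN_pos v θ u hu
  have hc : Real.sqrt (NN v θ u) * Real.cos (ang v θ u) = a + u * b := by
    rw [ang, Real.cos_arctan, ← ha, ← hb]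
    rw [mul_one_div, ← Real.sqrt_div hN.le]
    have h1 : NN v θ u / (1 + (u * a / (a + u * b)) ^ 2) = (a + u * b) ^ 2 := by
      have h2 : (1 : ℝ) + (u * a / (a + u * b)) ^ 2 = NN v θ u / (a + u * b) ^ 2 := by
        field_simp [NN, ← ha, ← hb]
        rw [NN, ← ha, ← hb]; ring
      rw [h2]
      field_simp
    rw [h1, Real.sqrt_sq hu.le]
  have hs : Real.sqrt (NN v θ u) * Real.sin (ang v θ u) = u * a := by
    rw [ang, Real.sin_arctan, ← ha, ← hb]
    have h3 : Real.sqrt (NN v θ u) * (u * a / (a + u * b) / Real.sqrt (1 + (u * a / (a + u * b)) ^ 2))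
        = Real.sqrt (NN v θ u) * (1 / Real.sqrt (1 + (u * a / (a + u * b)) ^ 2)) * (u * a / (a + u * b)) := by
      ring
    rw [h3]
    have h4 : Real.sqrt (NN v θ u) * (1 / Real.sqrt (1 + (u * a / (a + u * b)) ^ 2)) = a + u * b := by
      rw [mul_one_div, ← Real.sqrt_div hN.le]
      have h1 : NN v θ u / (1 + (u * a / (a + u * b)) ^ 2) = (a + u * b) ^ 2 := by
        have h2 : (1 : ℝ) + (u * a / (a + u * b)) ^ 2 = NN v θ u / (a + u * b) ^ 2 := by
          field_simp [NN, ← ha, ← hb]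
          rw [NN, ← ha, ← hb]; ring
        rw [h2]
        field_simp
      rw [h1, Real.sqrt_sq hu.le]
    rw [h4]
    field_simp
  have hcos : Real.cos (θ + ang v θ u) = Real.cos θ * Real.cos (ang v θ u) - Real.sin θ * Real.sin (ang v θ u) := by
    rw [Real.cos_add]
  have hsin : Real.sin (θ + ang v θ u) = Real.sin θ * Real.cos (ang v θ u) + Real.cos θ * Real.sin (ang v θ u) := by
    rw [Real.sin_add]
  ext
  · simp only [Prod.fst_add, Prod.smul_fst, smul_eq_mul, hcos]
    have : Real.sqrt (NN v θ u) * (Real.cos θ * Real.cos (ang v θ u) - Real.sin θ * Real.sin (ang v θ u))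
        = (Real.sqrt (NN v θ u) * Real.cos (ang v θ u)) * Real.cos θ
          - (Real.sqrt (NN v θ u) * Real.sin (ang v θ u)) * Real.sin θ := by ring
    rw [this, hc, hs]
    ring
  · simp only [Prod.snd_add, Prod.smul_snd, smul_eq_mul, hsin]
    have : Real.sqrt (NN v θ u) * (Real.sin θ * Real.cos (ang v θ u) + Real.cos θ * Real.sin (ang v θ u))
        = (Real.sqrt (NN v θ u) * Real.cos (ang v θ u)) * Real.sin θ
          + (Real.sqrt (NN v θ u) * Real.sin (ang v θ u)) * Real.cos θ := by ring
    rw [this, hc, hs]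
    ring

lemma hasDerivAt_FF' (v : ℝ → ℝ) (hv1 : Differentiable ℝ v) (hdv : Differentiable ℝ (deriv v))
    (hpos : ∀ θ, 0 < v θ) (θ : ℝ) :
    HasDerivAt (FF' v θ)
      (4 * (deriv v θ) ^ 2 / (v θ) ^ 2 + 2 - 2 * deriv (deriv v) θ / v θ) 0 := by
  set a := v θ with ha; set b := deriv v θ with hb
  have ha0 : 0 < a := hpos θ
  have hu : 0 < v θ + 0 * deriv v θ := by simpa using hpos θ
  have hang0 : ang v θ 0 = 0 := by simp [ang]
  have hN0 : NN v θ 0 = a ^ 2 := by simp [NN, ← ha]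
  have hang := hasDerivAt_ang v θ 0 hu
  have hinner : HasDerivAt (fun u => θ + ang v θ u) (a ^ 2 / NN v θ 0) 0 :=
    hang.const_add θ
  have hV : HasDerivAt (fun u => v (θ + ang v θ u))
      (deriv v (θ + ang v θ 0) * (a ^ 2 / NN v θ 0)) 0 :=
    (hv1 _).hasDerivAt.comp 0 hinner
  have hW : HasDerivAt (fun u => deriv v (θ + ang v θ u))
      (deriv (deriv v) (θ + ang v θ 0) * (a ^ 2 / NN v θ 0)) 0 :=
    (hdv _).hasDerivAt.comp 0 hinner
  have hVpos : 0 < v (θ + ang v θ 0) := hpos _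
  have hnum : HasDerivAt (fun u : ℝ => 2 * b * (a + u * b) + 2 * u * a ^ 2)
      (2 * b * (1 * b) + 2 * 1 * a ^ 2) 0 := by
    have h1 : HasDerivAt (fun u : ℝ => 2 * b * (a + u * b)) (2 * b * (1 * b)) 0 :=
      (((hasDerivAt_id (0:ℝ)).mul_const b).const_add a).const_mul (2 * b)
    have h2 : HasDerivAt (fun u : ℝ => 2 * u * a ^ 2) (2 * 1 * a ^ 2) 0 :=
      ((hasDerivAt_id (0:ℝ)).const_mul 2).mul_const (a ^ 2)
    exact h1.add h2
  have hden1 : HasDerivAt (fun u : ℝ => (v (θ + ang v θ u)) ^ 2)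
      ((2 : ℕ) * (v (θ + ang v θ 0)) ^ 1 * (deriv v (θ + ang v θ 0) * (a ^ 2 / NN v θ 0))) 0 :=
    hV.pow 2
  have hden2 : HasDerivAt (fun u : ℝ => (v (θ + ang v θ u)) ^ 3)
      ((3 : ℕ) * (v (θ + ang v θ 0)) ^ 2 * (deriv v (θ + ang v θ 0) * (a ^ 2 / NN v θ 0))) 0 :=
    hV.pow 3
  have h1 := hnum.div hden1 (pow_ne_zero 2 hVpos.ne')
  have hnum2 : HasDerivAt (fun u : ℝ => 2 * a ^ 2 * deriv v (θ + ang v θ u))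
      (2 * a ^ 2 * (deriv (deriv v) (θ + ang v θ 0) * (a ^ 2 / NN v θ 0))) 0 :=
    hW.const_mul (2 * a ^ 2)
  have h2 := hnum2.div hden2 (pow_ne_zero 3 hVpos.ne')
  have h := h1.sub h2
  have hFF' : FF' v θ = fun u : ℝ =>
      (2 * b * (a + u * b) + 2 * u * a ^ 2) / (v (θ + ang v θ u)) ^ 2
        - 2 * a ^ 2 * deriv v (θ + ang v θ u) / (v (θ + ang v θ u)) ^ 3 := by
    funext u
    simp [FF', ← ha, ← hb]
  rw [hFF']
  refine h.congr_deriv ?_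
  rw [hang0, hN0] at *
  simp only [add_zero]
  rw [← ha, ← hb]
  field_simp
  ring

theorem fundTensor_aux
    (v : ℝ → ℝ) (hv : ContDiff ℝ 2 v) (hper : ∀ θ, v (θ + 2 * Real.pi) = v θ)
    (hpos : ∀ θ, 0 < v θ) (G : ℝ × ℝ → ℝ)
    (hG : ∀ r θ : ℝ, 0 < r → G (r * Real.cos θ, r * Real.sin θ) = r ^ 2 / (v θ) ^ 2)
    (hG0 : G 0 = 0) :
    ∀ θ : ℝ,
      (1 / 2) * deriv (fun s : ℝ => deriv (fun t : ℝ =>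
        G ((v θ • ((Real.cos θ, Real.sin θ) : ℝ × ℝ))
          + s • (deriv v θ • ((Real.cos θ, Real.sin θ) : ℝ × ℝ)
            + v θ • ((-Real.sin θ, Real.cos θ) : ℝ × ℝ))
          + t • (deriv v θ • ((Real.cos θ, Real.sin θ) : ℝ × ℝ)
            + v θ • ((-Real.sin θ, Real.cos θ) : ℝ × ℝ)))) 0) 0 =
        2 * (deriv v θ) ^ 2 / (v θ) ^ 2 - deriv (deriv v) θ / v θ + 1 := by
  intro θ
  have hv1 : Differentiable ℝ v := hv.differentiable two_ne_zero
  have hdv : Differentiable ℝ (deriv v) := by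
    have h2 : ContDiff ℝ (1 + 1 : ℕ) v := by exact_mod_cast hv
    exact (((contDiff_succ_iff_deriv (n := 1)).mp (by exact_mod_cast h2)).2.2).differentiable one_ne_zero
  set w : ℝ × ℝ := v θ • ((Real.cos θ, Real.sin θ) : ℝ × ℝ) with hw
  set T : ℝ × ℝ := deriv v θ • ((Real.cos θ, Real.sin θ) : ℝ × ℝ)
      + v θ • ((-Real.sin θ, Real.cos θ) : ℝ × ℝ) with hT
  set g : ℝ → ℝ := fun u => G (w + u • T) with hg
  have ha0 : 0 < v θ := hpos θ
  -- step: rewrite inner function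
  have step1 : (fun s : ℝ => deriv (fun t : ℝ => G (w + s • T + t • T)) 0) = deriv g := by
    funext s
    have he : (fun t : ℝ => G (w + s • T + t • T)) = fun t : ℝ => g (s + t) := by
      funext t
      simp only [hg]
      congr 1
      rw [add_smul]
      abel
    rw [he, deriv_comp_const_add, add_zero]
  rw [step1]
  -- the open set U
  have hUopen : IsOpen {u : ℝ | 0 < v θ + u * deriv v θ} :=
    isOpen_lt continuous_const (by continuity)
  have hU0 : (0 : ℝ) ∈ {u : ℝ | 0 < v θ + u * deriv v θ} := by
    simp [ha0]
  -- g = FF on U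
  have hgF : ∀ u ∈ {u : ℝ | 0 < v θ + u * deriv v θ}, g u = FF v θ u := by
    intro u hu
    have hu' : 0 < v θ + u * deriv v θ := hu
    have hN : 0 < NN v θ u := NN_pos v θ u hu'
    have hpol := polar_eq v θ u hu'
    simp only [hg, hw, hT]
    rw [hpol, hG _ _ (Real.sqrt_pos.mpr hN), Real.sq_sqrt hN.le]
    rfl
  -- deriv g = FF' on U
  have hdg : ∀ u ∈ {u : ℝ | 0 < v θ + u * deriv v θ}, deriv g u = FF' v θ u := by
    intro u hu
    have heq : g =ᶠ[nhds u] FF v θ :=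
      Filter.eventuallyEq_of_mem (hUopen.mem_nhds hu) hgF
    rw [heq.deriv_eq]
    exact (hasDerivAt_FF v hv1 hpos θ u hu).deriv
  have heq2 : deriv g =ᶠ[nhds 0] FF' v θ :=
    Filter.eventuallyEq_of_mem (hUopen.mem_nhds hU0) hdg
  rw [heq2.deriv_eq, (hasDerivAt_FF' v hv1 hdv hpos θ).deriv]
  field_simp
  ring


/-- At the indicatrix point `w = v(θ)(cos θ, sin θ)`, the tangent
vector `T = v'(θ)(cos θ, sin θ) + v(θ)(−sin θ, cos θ)` of the indicatrix satisfies
`g_w(T,T) = 2 v'(θ)²/v(θ)² − v''(θ)/v(θ) + 1`. -/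
theorem fundTensor_tangent_tangent
    (v : ℝ → ℝ) (hv : ContDiff ℝ 2 v) (hper : ∀ θ, v (θ + 2 * Real.pi) = v θ)
    (hpos : ∀ θ, 0 < v θ) (G : ℝ × ℝ → ℝ)
    (hG : ∀ r θ : ℝ, 0 < r → G (r * Real.cos θ, r * Real.sin θ) = r ^ 2 / (v θ) ^ 2)
    (hG0 : G 0 = 0) :
    ∀ θ : ℝ,
      fundTensor G (v θ • ((Real.cos θ, Real.sin θ) : ℝ × ℝ))
        (deriv v θ • ((Real.cos θ, Real.sin θ) : ℝ × ℝ)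
          + v θ • ((-Real.sin θ, Real.cos θ) : ℝ × ℝ))
        (deriv v θ • ((Real.cos θ, Real.sin θ) : ℝ × ℝ)
          + v θ • ((-Real.sin θ, Real.cos θ) : ℝ × ℝ)) =
        2 * (deriv v θ) ^ 2 / (v θ) ^ 2 - deriv (deriv v) θ / v θ + 1 := by
  intro θ
  have h := fundTensor_aux v hv hper hpos G hG hG0 θ
  simpa [fundTensor] using h
end

section
/- Let v : ℝ → ℝ be twice continuously differentiable, 2π-periodic and everywhere positive, and define G : ℝ² → ℝ by G(w) = r²/v(θ)² whenever w = r·(cos θ, sin θ) with r > 0 (and G(0) = 0). Then the fundamental tensor g_w(u₁,u₂) := (1/2)·∂²/∂s∂t [G(w + s·u₁ + t·u₂)]|_{s=t=0} is a positive definite bilinear form on ℝ² for every w ≠ 0 if and only if 2·v'(θ)² − v(θ)·v''(θ) + v(θ)² > 0 for all θ ∈ ℝ. In other words, v generates a Minkowski norm F(w) = r/v(θ) in polar coordinates exactly under this condition. -/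
lemma fundTensor_self (G : ℝ × ℝ → ℝ) (w u : ℝ × ℝ) :
    fundTensor G w u u = (1 / 2) * deriv (deriv (fun τ : ℝ => G (w + τ • u))) 0 := by
  unfold fundTensor
  congr 1
  have h : ∀ s : ℝ, deriv (fun t : ℝ => G (w + s • u + t • u)) 0
      = deriv (fun τ : ℝ => G (w + τ • u)) s := by
    intro s
    have h2 : (fun t : ℝ => G (w + s • u + t • u)) = fun t : ℝ => G (w + (s + t) • u) := by
      funext t
      rw [add_smul, add_assoc]
    rw [h2]
    simpa using deriv_comp_const_add (fun τ : ℝ => G (w + τ • u)) s 0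
  simp only [h]

lemma polar_id (θ₀ X Y : ℝ) (hX : 0 < X) :
    (Real.sqrt (X ^ 2 + Y ^ 2) * Real.cos (θ₀ + Real.arctan (Y / X)),
     Real.sqrt (X ^ 2 + Y ^ 2) * Real.sin (θ₀ + Real.arctan (Y / X)))
      = (X * Real.cos θ₀ - Y * Real.sin θ₀, X * Real.sin θ₀ + Y * Real.cos θ₀) := by
  have hR : (0:ℝ) < X ^ 2 + Y ^ 2 := by positivity
  have hRpos : 0 < Real.sqrt (X ^ 2 + Y ^ 2) := Real.sqrt_pos.2 hR
  have hsq : Real.sqrt (1 + (Y / X) ^ 2) = Real.sqrt (X ^ 2 + Y ^ 2) / X := by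
    rw [show 1 + (Y / X) ^ 2 = (X ^ 2 + Y ^ 2) / X ^ 2 by field_simp,
      Real.sqrt_div hR.le, Real.sqrt_sq hX.le]
  rw [Real.cos_add, Real.sin_add, Real.cos_arctan, Real.sin_arctan, hsq]
  refine Prod.ext ?_ ?_ <;> (simp only []; field_simp)

lemma key_lemma (v : ℝ → ℝ) (hv : ContDiff ℝ 2 v) (hpos : ∀ θ, 0 < v θ)
    (G : ℝ × ℝ → ℝ)
    (hG : ∀ r θ : ℝ, 0 < r → G (r * Real.cos θ, r * Real.sin θ) = r ^ 2 / (v θ) ^ 2)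
    (r₀ θ₀ α β : ℝ) (hr : 0 < r₀) :
    fundTensor G (r₀ * Real.cos θ₀, r₀ * Real.sin θ₀)
      (α * Real.cos θ₀ - β * Real.sin θ₀, α * Real.sin θ₀ + β * Real.cos θ₀)
      (α * Real.cos θ₀ - β * Real.sin θ₀, α * Real.sin θ₀ + β * Real.cos θ₀)
      = ((α * v θ₀ - β * deriv v θ₀) ^ 2
          + β ^ 2 * ((v θ₀) ^ 2 + 2 * (deriv v θ₀) ^ 2 - v θ₀ * deriv (deriv v) θ₀))
        / (v θ₀) ^ 4 := by
  have hv1 : Differentiable ℝ v := hv.differentiable two_ne_zero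
  have hv2 : Differentiable ℝ (deriv v) := by
    have h21 : ContDiff ℝ 1 (deriv v) := by
      have : ContDiff ℝ (1 + 1 : ℕ) v := by exact_mod_cast hv
      exact (contDiff_succ_iff_deriv.1 (by exact_mod_cast this)).2.2
    exact h21.differentiable one_ne_zero
  -- notation
  set w : ℝ × ℝ := (r₀ * Real.cos θ₀, r₀ * Real.sin θ₀) with hw
  set u : ℝ × ℝ := (α * Real.cos θ₀ - β * Real.sin θ₀, α * Real.sin θ₀ + β * Real.cos θ₀) with hu
  set Θ : ℝ → ℝ := fun τ => θ₀ + Real.arctan (τ * β / (r₀ + τ * α)) with hΘdef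
  set P : ℝ → ℝ := fun τ => (r₀ + τ * α) ^ 2 + (τ * β) ^ 2 with hPdef
  set q : ℝ → ℝ := fun τ => P τ / (v (Θ τ)) ^ 2 with hqdef
  set q1 : ℝ → ℝ := fun τ =>
    (2 * (r₀ + τ * α) * α + 2 * (τ * β) * β) / (v (Θ τ)) ^ 2
      - 2 * r₀ * β * deriv v (Θ τ) / (v (Θ τ)) ^ 3 with hq1def
  set ε : ℝ := r₀ / (|α| + 1) with hεdef
  have hε : 0 < ε := by positivity
  have hball : ∀ τ : ℝ, |τ| < ε → 0 < r₀ + τ * α := by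
    intro τ hτ
    have h1 : |τ * α| ≤ |τ| * (|α| + 1) := by
      rw [abs_mul]
      have := abs_nonneg τ
      nlinarith [abs_nonneg α]
    have h2 : |τ| * (|α| + 1) < r₀ := by
      rw [hεdef] at hτ
      have hd : (0:ℝ) < |α| + 1 := by positivity
      calc |τ| * (|α| + 1) < (r₀ / (|α| + 1)) * (|α| + 1) := by
            apply mul_lt_mul_of_pos_right hτ hd
        _ = r₀ := by field_simp
    nlinarith [neg_abs_le (τ * α)]
  have hPpos : ∀ τ : ℝ, |τ| < ε → 0 < P τ := by
    intro τ hτ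
    have := hball τ hτ
    rw [hPdef]
    positivity
  -- the eventual equality G (w + τ • u) = q τ
  have hXY : ∀ τ : ℝ, w + τ • u
      = ((r₀ + τ * α) * Real.cos θ₀ - (τ * β) * Real.sin θ₀,
         (r₀ + τ * α) * Real.sin θ₀ + (τ * β) * Real.cos θ₀) := by
    intro τ
    rw [hw, hu]
    refine Prod.ext ?_ ?_ <;> (simp [Prod.smul_def]; ring)
  have hGq : ∀ τ : ℝ, |τ| < ε → G (w + τ • u) = q τ := by
    intro τ hτ
    have hX := hball τ hτ
    rw [hXY τ, ← polar_id θ₀ (r₀ + τ * α) (τ * β) hX]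
    have hRpos : 0 < Real.sqrt ((r₀ + τ * α) ^ 2 + (τ * β) ^ 2) := by
      apply Real.sqrt_pos.2; positivity
    rw [hG _ _ hRpos, Real.sq_sqrt (by positivity)]
  -- derivative of Θ
  have hΘ' : ∀ τ : ℝ, |τ| < ε → HasDerivAt Θ (r₀ * β / P τ) τ := by
    intro τ hτ
    have hX := hball τ hτ
    have hP := hPpos τ hτ
    have hg : HasDerivAt (fun τ : ℝ => τ * β / (r₀ + τ * α))
        ((β * (r₀ + τ * α) - (τ * β) * α) / (r₀ + τ * α) ^ 2) τ := by
      have h := ((hasDerivAt_id τ).mul_const β).div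
        (((hasDerivAt_id τ).mul_const α).const_add r₀) hX.ne'
      refine h.congr_deriv ?_
      simp [id]
      try ring
    have harc := (Real.hasDerivAt_arctan (τ * β / (r₀ + τ * α))).comp τ hg
    have := harc.const_add θ₀
    refine this.congr_deriv ?_
    rw [hPdef]
    have h1 : (0:ℝ) < 1 + (τ * β / (r₀ + τ * α)) ^ 2 := by positivity
    field_simp
    ring
  -- derivative of q
  have hq' : ∀ τ : ℝ, |τ| < ε → HasDerivAt q (q1 τ) τ := by
    intro τ hτ
    have hX := hball τ hτ
    have hP := hPpos τ hτ
    have hvne : v (Θ τ) ≠ 0 := (hpos _).ne'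
    have hPd : HasDerivAt P (2 * (r₀ + τ * α) * α + 2 * (τ * β) * β) τ := by
      have h1 : HasDerivAt (fun τ : ℝ => r₀ + τ * α) α τ := by
        simpa using ((hasDerivAt_id τ).mul_const α).const_add r₀
      have h2 : HasDerivAt (fun τ : ℝ => τ * β) β τ := by
        simpa using (hasDerivAt_id τ).mul_const β
      have := (h1.pow 2).add (h2.pow 2)
      refine this.congr_deriv ?_
      push_cast
      ring
    have hvΘ : HasDerivAt (fun τ => v (Θ τ)) (deriv v (Θ τ) * (r₀ * β / P τ)) τ :=
      ((hv1 (Θ τ)).hasDerivAt).comp τ (hΘ' τ hτ)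
    have hden : HasDerivAt (fun τ => (v (Θ τ)) ^ 2)
        ((2 : ℕ) * (v (Θ τ)) ^ 1 * (deriv v (Θ τ) * (r₀ * β / P τ))) τ := hvΘ.pow 2
    have := hPd.div hden (pow_ne_zero 2 hvne)
    refine this.congr_deriv ?_
    rw [hq1def]
    field_simp
    ring
  -- reduce fundTensor to deriv q1 0
  rw [fundTensor_self]
  have hmem : Metric.ball (0:ℝ) ε ∈ nhds (0:ℝ) := Metric.ball_mem_nhds 0 hε
  have hfe : (fun τ : ℝ => G (w + τ • u)) =ᶠ[nhds 0] q := by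
    filter_upwards [hmem] with τ hτ
    exact hGq τ (by simpa [Real.dist_eq] using hτ)
  have hde : deriv (fun τ : ℝ => G (w + τ • u)) =ᶠ[nhds 0] q1 := by
    have h1 := hfe.deriv
    have h2 : deriv q =ᶠ[nhds 0] q1 := by
      filter_upwards [hmem] with τ hτ
      exact (hq' τ (by simpa [Real.dist_eq] using hτ)).deriv
    exact h1.trans h2
  rw [hde.deriv_eq]
  -- compute deriv q1 0
  have h0ε : |(0:ℝ)| < ε := by simpa using hε
  have hΘ0 : Θ 0 = θ₀ := by simp [hΘdef]
  have hP0 : P 0 = r₀ ^ 2 := by simp [hPdef]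
  have hvne : v θ₀ ≠ 0 := (hpos _).ne'
  have hΘ0' : HasDerivAt Θ (β / r₀) 0 := by
    have := hΘ' 0 h0ε
    rw [hP0] at this
    convert this using 1
    field_simp
  have hvΘ0 : HasDerivAt (fun τ => v (Θ τ)) (deriv v θ₀ * (β / r₀)) 0 := by
    have := ((hv1 (Θ 0)).hasDerivAt).comp 0 hΘ0'
    rwa [hΘ0] at this
  have hv'Θ0 : HasDerivAt (fun τ => deriv v (Θ τ)) (deriv (deriv v) θ₀ * (β / r₀)) 0 := by
    have := ((hv2 (Θ 0)).hasDerivAt).comp 0 hΘ0'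
    rwa [hΘ0] at this
  have hnum : HasDerivAt (fun τ : ℝ => 2 * (r₀ + τ * α) * α + 2 * (τ * β) * β)
      (2 * α * α + 2 * β * β) 0 := by
    have h1 : HasDerivAt (fun τ : ℝ => r₀ + τ * α) α 0 := by
      simpa using ((hasDerivAt_id (0:ℝ)).mul_const α).const_add r₀
    have h2 : HasDerivAt (fun τ : ℝ => τ * β) β 0 := by
      simpa using (hasDerivAt_id (0:ℝ)).mul_const β
    have := ((h1.const_mul 2).mul_const α).add ((h2.const_mul 2).mul_const β)
    exact this
  have hden2 : HasDerivAt (fun τ => (v (Θ τ)) ^ 2)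
      ((2 : ℕ) * (v (Θ 0)) ^ 1 * (deriv v θ₀ * (β / r₀))) 0 := by
    have := hvΘ0.pow 2
    rwa [hΘ0] at this ⊢
  have hden3 : HasDerivAt (fun τ => (v (Θ τ)) ^ 3)
      ((3 : ℕ) * (v (Θ 0)) ^ 2 * (deriv v θ₀ * (β / r₀))) 0 := by
    have := hvΘ0.pow 3
    rwa [hΘ0] at this ⊢
  have hA : HasDerivAt (fun τ : ℝ => (2 * (r₀ + τ * α) * α + 2 * (τ * β) * β) / (v (Θ τ)) ^ 2)
      (((2 * α * α + 2 * β * β) * (v (Θ 0)) ^ 2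
        - (2 * (r₀ + 0 * α) * α + 2 * (0 * β) * β)
          * ((2 : ℕ) * (v (Θ 0)) ^ 1 * (deriv v θ₀ * (β / r₀)))) / ((v (Θ 0)) ^ 2) ^ 2) 0 := by
    exact hnum.div hden2 (by rw [hΘ0]; exact pow_ne_zero 2 hvne)
  have hBnum : HasDerivAt (fun τ : ℝ => 2 * r₀ * β * deriv v (Θ τ))
      (2 * r₀ * β * (deriv (deriv v) θ₀ * (β / r₀))) 0 := hv'Θ0.const_mul _
  have hB : HasDerivAt (fun τ : ℝ => 2 * r₀ * β * deriv v (Θ τ) / (v (Θ τ)) ^ 3)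
      ((2 * r₀ * β * (deriv (deriv v) θ₀ * (β / r₀)) * (v (Θ 0)) ^ 3
        - 2 * r₀ * β * deriv v (Θ 0)
          * ((3 : ℕ) * (v (Θ 0)) ^ 2 * (deriv v θ₀ * (β / r₀)))) / ((v (Θ 0)) ^ 3) ^ 2) 0 := by
    exact hBnum.div hden3 (by rw [hΘ0]; exact pow_ne_zero 3 hvne)
  have hq1d : deriv q1 0
      = (((2 * α * α + 2 * β * β) * (v (Θ 0)) ^ 2
          - (2 * (r₀ + 0 * α) * α + 2 * (0 * β) * β)
            * ((2 : ℕ) * (v (Θ 0)) ^ 1 * (deriv v θ₀ * (β / r₀)))) / ((v (Θ 0)) ^ 2) ^ 2)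
        - ((2 * r₀ * β * (deriv (deriv v) θ₀ * (β / r₀)) * (v (Θ 0)) ^ 3
          - 2 * r₀ * β * deriv v (Θ 0)
            * ((3 : ℕ) * (v (Θ 0)) ^ 2 * (deriv v θ₀ * (β / r₀)))) / ((v (Θ 0)) ^ 3) ^ 2) := by
    have h := (hA.sub hB).deriv
    exact h
  rw [hq1d, hΘ0]
  push_cast
  field_simp
  ring

/-- The fundamental tensor `g_w` is positive definite for every
`w ≠ 0` if and only if `2 v'(θ)² − v(θ) v''(θ) + v(θ)² > 0` for all `θ`, i.e. `v`
generates a Minkowski norm exactly under the strong convexity condition. -/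
theorem fundTensor_posDef_iff_strong_convexity
    (v : ℝ → ℝ) (hv : ContDiff ℝ 2 v) (hper : ∀ θ, v (θ + 2 * Real.pi) = v θ)
    (hpos : ∀ θ, 0 < v θ) (G : ℝ × ℝ → ℝ)
    (hG : ∀ r θ : ℝ, 0 < r → G (r * Real.cos θ, r * Real.sin θ) = r ^ 2 / (v θ) ^ 2)
    (hG0 : G 0 = 0) :
    (∀ w : ℝ × ℝ, w ≠ 0 → ∀ u : ℝ × ℝ, u ≠ 0 → 0 < fundTensor G w u u) ↔
      ∀ θ : ℝ, 0 < 2 * (deriv v θ) ^ 2 - v θ * deriv (deriv v) θ + (v θ) ^ 2 := by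
  constructor
  · intro H θ
    have hV := hpos θ
    set V := v θ with hVdef
    set V' := deriv v θ with hV'def
    set V'' := deriv (deriv v) θ with hV''def
    have hsc : Real.sin θ ^ 2 + Real.cos θ ^ 2 = 1 := Real.sin_sq_add_cos_sq θ
    have hw : ((Real.cos θ, Real.sin θ) : ℝ × ℝ) ≠ 0 := by
      intro h
      rw [Prod.ext_iff] at h
      simp only [Prod.fst_zero, Prod.snd_zero] at h
      rw [h.1, h.2] at hsc
      norm_num at hsc
    have hu : ((V' * Real.cos θ - V * Real.sin θ, V' * Real.sin θ + V * Real.cos θ) : ℝ × ℝ)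
        ≠ 0 := by
      intro h
      rw [Prod.ext_iff] at h
      simp only [Prod.fst_zero, Prod.snd_zero] at h
      have : V = 0 := by
        linear_combination Real.cos θ * h.2 - Real.sin θ * h.1 - V * hsc
      exact absurd this hV.ne'
    have hval := H (Real.cos θ, Real.sin θ) hw _ hu
    have hk := key_lemma v hv hpos G hG 1 θ V' V one_pos
    simp only [one_mul] at hk
    rw [hk] at hval
    have h4 : (0:ℝ) < V ^ 4 := by positivity
    rw [div_pos_iff] at hval
    rcases hval with ⟨h1, _⟩ | ⟨_, h2⟩
    · nlinarith [sq_nonneg (V' * V - V * V')]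
    · linarith
  · intro H w hw u hu
    -- polar coordinates of w
    set z : ℂ := Complex.ofReal w.1 + w.2 * Complex.I with hz
    have hzre : z.re = w.1 := by simp [hz]
    have hzim : z.im = w.2 := by simp [hz]
    have hz0 : z ≠ 0 := by
      intro h
      apply hw
      rw [Complex.ext_iff] at h
      simp only [Complex.zero_re, Complex.zero_im] at h
      rw [hzre] at h
      rw [hzim] at h
      exact Prod.ext h.1 h.2
    set r₀ : ℝ := ‖z‖ with hr₀
    set θ₀ : ℝ := Complex.arg z with hθ₀
    have hr₀pos : 0 < r₀ := by
      rw [hr₀]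
      exact norm_pos_iff.2 hz0
    have hwc : w.1 = r₀ * Real.cos θ₀ := by
      rw [hr₀, hθ₀, Complex.norm_mul_cos_arg, hzre]
    have hws : w.2 = r₀ * Real.sin θ₀ := by
      rw [hr₀, hθ₀, Complex.norm_mul_sin_arg, hzim]
    set α : ℝ := u.1 * Real.cos θ₀ + u.2 * Real.sin θ₀ with hα
    set β : ℝ := -u.1 * Real.sin θ₀ + u.2 * Real.cos θ₀ with hβ
    have hsc : Real.sin θ₀ ^ 2 + Real.cos θ₀ ^ 2 = 1 := Real.sin_sq_add_cos_sq θ₀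
    have hu1 : u.1 = α * Real.cos θ₀ - β * Real.sin θ₀ := by
      rw [hα, hβ]; linear_combination (-u.1) * hsc
    have hu2 : u.2 = α * Real.sin θ₀ + β * Real.cos θ₀ := by
      rw [hα, hβ]; linear_combination (-u.2) * hsc
    have hαβ : ¬(α = 0 ∧ β = 0) := by
      rintro ⟨ha, hb⟩
      apply hu
      have h1 : u.1 = 0 := by rw [hu1, ha, hb]; ring
      have h2 : u.2 = 0 := by rw [hu2, ha, hb]; ring
      exact Prod.ext h1 h2
    have hweq : w = (r₀ * Real.cos θ₀, r₀ * Real.sin θ₀) := Prod.ext hwc hws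
    have hueq : u = (α * Real.cos θ₀ - β * Real.sin θ₀,
        α * Real.sin θ₀ + β * Real.cos θ₀) := Prod.ext hu1 hu2
    rw [hweq, hueq, key_lemma v hv hpos G hG r₀ θ₀ α β hr₀pos]
    have hV := hpos θ₀
    have hK := H θ₀
    have h4 : (0:ℝ) < v θ₀ ^ 4 := by positivity
    apply div_pos _ h4
    rcases eq_or_ne β 0 with hb | hb
    · have ha : α ≠ 0 := by
        intro ha; exact hαβ ⟨ha, hb⟩
      rw [hb]
      have : (α * v θ₀ - 0 * deriv v θ₀) ^ 2 = (α * v θ₀) ^ 2 := by ring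
      rw [this]
      have : (0:ℝ) ^ 2 * ((v θ₀) ^ 2 + 2 * (deriv v θ₀) ^ 2 - v θ₀ * deriv (deriv v) θ₀) = 0 := by
        ring
      rw [this, add_zero]
      positivity
    · have h1 : 0 < β ^ 2 * ((v θ₀) ^ 2 + 2 * (deriv v θ₀) ^ 2 - v θ₀ * deriv (deriv v) θ₀) := by
        apply mul_pos (by positivity)
        nlinarith [hK]
      nlinarith [sq_nonneg (α * v θ₀ - β * deriv v θ₀)]
end

section
/- Let v : ℝ → ℝ be twice continuously differentiable, 2π-periodic and everywhere positive, and define G : ℝ² → ℝ by G(w) = r²/v(θ)² whenever w = r·(cos θ, sin θ) with r > 0 (and G(0) = 0). For w = r·(cos θ, sin θ) with r > 0, the fundamental tensor g_w(u₁,u₂) := (1/2)·∂²/∂s∂t [G(w + s·u₁ + t·u₂)]|_{s=t=0} evaluated on the standard basis vector e₁ = (1,0) satisfies g_w(e₁, e₁) = (1/v(θ)²)·(1 + sin(2θ)·v'(θ)/v(θ) + sin²θ·(3·v'(θ)²/v(θ)² − v''(θ)/v(θ))). -/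
/-- In Cartesian coordinates,
`g_w(e₁,e₁) = (1/v²)(1 + sin(2θ) v'/v + sin²θ (3 v'²/v² − v''/v))`. -/
theorem fundTensor_e1_e1
    (v : ℝ → ℝ) (hv : ContDiff ℝ 2 v) (hper : ∀ θ, v (θ + 2 * Real.pi) = v θ)
    (hpos : ∀ θ, 0 < v θ) (G : ℝ × ℝ → ℝ)
    (hG : ∀ r θ : ℝ, 0 < r → G (r * Real.cos θ, r * Real.sin θ) = r ^ 2 / (v θ) ^ 2)
    (hG0 : G 0 = 0) :
    ∀ r θ : ℝ, 0 < r →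
      fundTensor G (r * Real.cos θ, r * Real.sin θ) (1, 0) (1, 0) =
        (1 / (v θ) ^ 2) *
          (1 + Real.sin (2 * θ) * (deriv v θ / v θ)
            + Real.sin θ ^ 2 *
                (3 * (deriv v θ) ^ 2 / (v θ) ^ 2 - deriv (deriv v) θ / v θ)) := by
  intro r θ hr
  have hvθ : 0 < v θ := hpos θ
  set c := Real.cos θ with hc
  set s := Real.sin θ with hs
  have hsc : s ^ 2 + c ^ 2 = 1 := Real.sin_sq_add_cos_sq θ
  -- differentiability of v and deriv v
  have hv1 : ∀ x : ℝ, HasDerivAt v (deriv v x) x := fun x =>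
    ((hv.differentiable (by norm_num)) x).hasDerivAt
  have hvd : ContDiff ℝ 1 (deriv v) := by
    have h := (contDiff_succ_iff_deriv (n := 1)).mp (by exact_mod_cast hv)
    exact h.2.2
  have hv2 : ∀ x : ℝ, HasDerivAt (deriv v) (deriv (deriv v) x) x := fun x =>
    ((hvd.differentiable one_ne_zero) x).hasDerivAt
  have hvne : ∀ x : ℝ, v x ≠ 0 := fun x => (hpos x).ne'
  -- the auxiliary functions
  set g : ℝ → ℝ := fun u => -(u * s) / (r + u * c) with hgdef
  set φ : ℝ → ℝ := fun u => θ + Real.arctan (g u) with hφdef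
  set A : ℝ → ℝ := fun u => r ^ 2 + 2 * r * c * u + u ^ 2 with hAdef
  set F : ℝ → ℝ := fun u => A u / (v (φ u)) ^ 2 with hFdef
  set f : ℝ → ℝ := fun u => G (r * c + u, r * s) with hfdef
  have hp : ∀ u : ℝ, |u| < r → 0 < r + u * c := by
    intro u hu
    have h1 : |u * c| ≤ |u| := by
      rw [abs_mul]
      calc |u| * |c| ≤ |u| * 1 := by
            apply mul_le_mul_of_nonneg_left _ (abs_nonneg u)
            rw [hc]; exact Real.abs_cos_le_one θ
        _ = |u| := mul_one _
    have h2 := neg_abs_le (u * c)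
    linarith
  -- the polar identity : f = F on the ball
  have key : ∀ u : ℝ, |u| < r → f u = F u := by
    intro u hu
    have hp0 : 0 < r + u * c := hp u hu
    set p : ℝ := r + u * c with hpdef
    set q : ℝ := -(u * s) with hqdef
    have hAval : A u = p ^ 2 + q ^ 2 := by
      simp only [hAdef, hpdef, hqdef]
      linear_combination (-(u ^ 2)) * hsc
    have hApos : 0 < A u := by rw [hAval]; positivity
    set R : ℝ := Real.sqrt (A u) with hRdef
    have hRpos : 0 < R := Real.sqrt_pos.mpr hApos
    have hR2 : R ^ 2 = A u := Real.sq_sqrt hApos.le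
    have hx : g u = q / p := by simp only [hgdef, hpdef, hqdef]
    have hsqrt : Real.sqrt (1 + (g u) ^ 2) = R / p := by
      rw [hx]
      have h1 : 1 + (q / p) ^ 2 = (p ^ 2 + q ^ 2) / p ^ 2 := by
        field_simp
      rw [h1, ← hAval, Real.sqrt_div hApos.le, Real.sqrt_sq hp0.le, ← hRdef]
    have hca : Real.cos (Real.arctan (g u)) = p / R := by
      rw [Real.cos_arctan, hsqrt, one_div_div]
    have hsa : Real.sin (Real.arctan (g u)) = q / R := by
      rw [Real.sin_arctan, hsqrt, hx]
      field_simp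
    have hcos : R * Real.cos (φ u) = r * c + u := by
      have h1 : Real.cos (φ u) = c * (p / R) - s * (q / R) := by
        simp only [hφdef]
        rw [Real.cos_add, hca, hsa, ← hc, ← hs]
      rw [h1]
      have h2 : R * (c * (p / R) - s * (q / R)) = c * p - s * q := by
        field_simp
      rw [h2]
      simp only [hpdef, hqdef]
      linear_combination u * hsc
    have hsin : R * Real.sin (φ u) = r * s := by
      have h1 : Real.sin (φ u) = s * (p / R) + c * (q / R) := by
        simp only [hφdef]
        rw [Real.sin_add, hca, hsa, ← hc, ← hs]
      rw [h1]
      have h2 : R * (s * (p / R) + c * (q / R)) = s * p + c * q := by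
        field_simp
      rw [h2]
      simp only [hpdef, hqdef]
      ring
    have hGval := hG R (φ u) hRpos
    rw [hcos, hsin] at hGval
    simp only [hfdef, hFdef]
    rw [hGval, hR2]
  -- derivative data
  set gd : ℝ → ℝ := fun u => -(s * r) / (r + u * c) ^ 2 with hgddef
  set φd : ℝ → ℝ := fun u => gd u / (1 + (g u) ^ 2) with hφddef
  set W : ℝ → ℝ := fun u => (v (φ u)) ^ 2 with hWdef
  set Wd : ℝ → ℝ := fun u => 2 * v (φ u) * deriv v (φ u) * φd u with hWddef
  set F₁ : ℝ → ℝ := fun u => ((2 * (r * c) + 2 * u) * W u - A u * Wd u) / (W u) ^ 2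
    with hF₁def
  have hgd : ∀ u : ℝ, |u| < r → HasDerivAt g (gd u) u := by
    intro u hu
    have hp0 : (0:ℝ) < r + u * c := hp u hu
    have h1 : HasDerivAt (fun u : ℝ => -(u * s)) (-s) u := by
      simpa using ((hasDerivAt_id u).mul_const s).fun_neg
    have h2 : HasDerivAt (fun u : ℝ => r + u * c) c u := by
      simpa using ((hasDerivAt_id u).mul_const c).const_add r
    have h := h1.div h2 hp0.ne'
    have heq : (-s * (r + u * c) - -(u * s) * c) / (r + u * c) ^ 2 = gd u := by
      simp only [hgddef]
      field_simp
      ring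
    rw [← heq]
    exact h
  have hφd : ∀ u : ℝ, |u| < r → HasDerivAt φ (φd u) u := by
    intro u hu
    have h := ((Real.hasDerivAt_arctan (g u)).comp u (hgd u hu)).const_add θ
    have heq : 1 / (1 + g u ^ 2) * gd u = φd u := by
      simp only [hφddef]; ring
    rw [← heq]
    exact h
  have hAd : ∀ u : ℝ, HasDerivAt A (2 * (r * c) + 2 * u) u := by
    intro u
    have h1 : HasDerivAt (fun x : ℝ => r ^ 2 + 2 * r * c * x) (2 * r * c) u := by
      simpa using ((hasDerivAt_id u).const_mul (2 * r * c)).const_add (r ^ 2)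
    have h2 : HasDerivAt (fun x : ℝ => x ^ 2) (2 * u) u := by
      simpa using hasDerivAt_pow 2 u
    have h := h1.add h2
    have heq : 2 * (r * c) + 2 * u = 2 * r * c + 2 * u := by ring
    rw [heq]
    exact h
  have hWd : ∀ u : ℝ, |u| < r → HasDerivAt W (Wd u) u := by
    intro u hu
    have h := ((hv1 (φ u)).comp u (hφd u hu)).pow 2
    have heq : (2 : ℕ) * v (φ u) ^ (2 - 1) * (deriv v (φ u) * φd u) = Wd u := by
      simp only [hWddef]; push_cast; ring
    rw [← heq]
    exact h
  have hWne : ∀ u : ℝ, W u ≠ 0 := fun u => pow_ne_zero 2 (hvne (φ u))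
  have hFd : ∀ u : ℝ, |u| < r → HasDerivAt F (F₁ u) u := by
    intro u hu
    exact (hAd u).div (hWd u hu) (hWne u)
  -- f agrees with F near every point of the ball
  have hopen : IsOpen {u : ℝ | |u| < r} := by
    have h : {u : ℝ | |u| < r} = Metric.ball (0 : ℝ) r := by
      ext u
      simp [Real.dist_eq]
    rw [h]
    exact Metric.isOpen_ball
  have hev : ∀ u : ℝ, |u| < r → f =ᶠ[nhds u] F := by
    intro u hu
    exact Filter.eventuallyEq_of_mem (hopen.mem_nhds hu) (fun x hx => key x hx)
  have hderiv_f : ∀ u : ℝ, |u| < r → deriv f u = F₁ u := by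
    intro u hu
    rw [(hev u hu).deriv_eq, (hFd u hu).deriv]
  have h0r : |(0:ℝ)| < r := by simpa using hr
  have hev2 : deriv f =ᶠ[nhds (0:ℝ)] F₁ :=
    Filter.eventuallyEq_of_mem (hopen.mem_nhds h0r) (fun x hx => hderiv_f x hx)
  -- second derivative : HasDerivAt F₁ ? 0
  -- pieces at 0
  have hrne : r ≠ 0 := hr.ne'
  have hlin : HasDerivAt (fun u : ℝ => 2 * (r * c) + 2 * u) 2 0 := by
    simpa using ((hasDerivAt_id (0:ℝ)).const_mul 2).const_add (2 * (r * c))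
  have hP : HasDerivAt (fun u : ℝ => (r + u * c) ^ 2) (2 * (r + 0 * c) ^ 1 * c) 0 := by
    have h2 : HasDerivAt (fun u : ℝ => r + u * c) c 0 := by
      simpa using ((hasDerivAt_id (0:ℝ)).mul_const c).const_add r
    exact h2.pow 2
  have hPne : (r + 0 * c) ^ 2 ≠ 0 := pow_ne_zero 2 (hp 0 h0r).ne'
  have hgd0 : HasDerivAt gd ((0 * (r + 0 * c) ^ 2 - -(s * r) * (2 * (r + 0 * c) ^ 1 * c)) /
      ((r + 0 * c) ^ 2) ^ 2) 0 := by
    exact (hasDerivAt_const 0 (-(s * r))).div hP hPne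
  have hsqne : 1 + (g 0) ^ 2 ≠ 0 := by positivity
  have hgsq : HasDerivAt (fun u : ℝ => 1 + (g u) ^ 2) (2 * (g 0) ^ 1 * gd 0) 0 := by
    exact ((hgd 0 h0r).pow 2).const_add 1
  have hφd0 : HasDerivAt φd
      (((0 * (r + 0 * c) ^ 2 - -(s * r) * (2 * (r + 0 * c) ^ 1 * c)) /
        ((r + 0 * c) ^ 2) ^ 2 * (1 + (g 0) ^ 2) - gd 0 * (2 * (g 0) ^ 1 * gd 0)) /
        (1 + (g 0) ^ 2) ^ 2) 0 := by
    exact hgd0.div hgsq hsqne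
  set E : ℝ := ((0 * (r + 0 * c) ^ 2 - -(s * r) * (2 * (r + 0 * c) ^ 1 * c)) /
        ((r + 0 * c) ^ 2) ^ 2 * (1 + (g 0) ^ 2) - gd 0 * (2 * (g 0) ^ 1 * gd 0)) /
        (1 + (g 0) ^ 2) ^ 2 with hEdef
  have hvφ : HasDerivAt (fun u : ℝ => v (φ u)) (deriv v (φ 0) * φd 0) 0 :=
    (hv1 (φ 0)).comp 0 (hφd 0 h0r)
  have hv'φ : HasDerivAt (fun u : ℝ => deriv v (φ u)) (deriv (deriv v) (φ 0) * φd 0) 0 :=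
    (hv2 (φ 0)).comp 0 (hφd 0 h0r)
  have hWd0 : HasDerivAt Wd
      ((2 * (deriv v (φ 0) * φd 0) * deriv v (φ 0) +
        2 * v (φ 0) * (deriv (deriv v) (φ 0) * φd 0)) * φd 0 +
        2 * v (φ 0) * deriv v (φ 0) * E) 0 := by
    exact ((hvφ.const_mul 2).mul hv'φ).mul hφd0
  have hNum : HasDerivAt (fun u : ℝ => (2 * (r * c) + 2 * u) * W u - A u * Wd u)
      ((2 * W 0 + (2 * (r * c) + 2 * 0) * Wd 0) -
       ((2 * (r * c) + 2 * 0) * Wd 0 + A 0 *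
        ((2 * (deriv v (φ 0) * φd 0) * deriv v (φ 0) +
          2 * v (φ 0) * (deriv (deriv v) (φ 0) * φd 0)) * φd 0 +
          2 * v (φ 0) * deriv v (φ 0) * E))) 0 := by
    exact (hlin.mul (hWd 0 h0r)).sub ((hAd 0).mul hWd0)
  have hWsq : HasDerivAt (fun u : ℝ => (W u) ^ 2) (2 * (W 0) ^ 1 * Wd 0) 0 :=
    (hWd 0 h0r).pow 2
  have hWsqne : (W 0) ^ 2 ≠ 0 := pow_ne_zero 2 (hWne 0)
  have hF₁0 := hNum.fun_div hWsq hWsqne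
  -- reduce fundTensor to deriv (deriv f) 0
  have harg : ∀ s' t : ℝ,
      ((r * c, r * s) : ℝ × ℝ) + s' • ((1:ℝ), (0:ℝ)) + t • ((1:ℝ), (0:ℝ)) =
        (r * c + (s' + t), r * s) := by
    intro s' t
    simp [Prod.ext_iff]
    ring
  have hstep : fundTensor G (r * c, r * s) (1, 0) (1, 0) = (1/2) * deriv (deriv f) 0 := by
    unfold fundTensor
    congr 1
    have hfun : (fun s' : ℝ => deriv
        (fun t : ℝ => G ((r * c, r * s) + s' • ((1:ℝ),(0:ℝ)) + t • ((1:ℝ),(0:ℝ)))) 0)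
        = deriv f := by
      funext s'
      have h1 : (fun t : ℝ => G ((r * c, r * s) + s' • ((1:ℝ),(0:ℝ)) + t • ((1:ℝ),(0:ℝ))))
          = fun t : ℝ => f (s' + t) := by
        funext t
        rw [harg]
      rw [h1, deriv_comp_const_add, add_zero]
    rw [hfun]
  rw [hstep, hev2.deriv_eq, hF₁0.deriv]
  -- now evaluate everything
  have hg0 : g 0 = 0 := by simp [hgdef]
  have hφ0 : φ 0 = θ := by simp [hφdef, hg0]
  have hgd0v : gd 0 = -(s * r) / r ^ 2 := by simp [hgddef]
  have hφd0v : φd 0 = -(s * r) / r ^ 2 := by simp [hφddef, hg0, hgd0v]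
  have hA0v : A 0 = r ^ 2 := by simp [hAdef]
  have hW0v : W 0 = (v θ) ^ 2 := by simp [hWdef, hφ0]
  have hWd0v : Wd 0 = 2 * v θ * deriv v θ * (-(s * r) / r ^ 2) := by
    rw [hWddef]
    simp only [hφ0, hφd0v]
  have hEv : E = 2 * s * c / r ^ 2 := by
    rw [hEdef, hg0, hgd0v]
    simp only [zero_mul, add_zero]
    field_simp
    ring
  rw [hφ0, hφd0v, hA0v, hW0v, hWd0v, hEv, Real.sin_two_mul, ← hs, ← hc]
  have hvne' : v θ ≠ 0 := hvθ.ne'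
  field_simp
  ring
end

section
/- Let v : ℝ → ℝ be twice continuously differentiable, 2π-periodic and everywhere positive, and define G : ℝ² → ℝ by G(w) = r²/v(θ)² whenever w = r·(cos θ, sin θ) with r > 0 (and G(0) = 0). For w = r·(cos θ, sin θ) with r > 0, the fundamental tensor g_w(u₁,u₂) := (1/2)·∂²/∂s∂t [G(w + s·u₁ + t·u₂)]|_{s=t=0} evaluated on the standard basis vectors e₁ = (1,0), e₂ = (0,1) satisfies g_w(e₁, e₂) = (1/v(θ)²)·(−cos(2θ)·v'(θ)/v(θ) − (1/2)·sin(2θ)·(3·v'(θ)²/v(θ)² − v''(θ)/v(θ))). -/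
private lemma Gval' (v : ℝ → ℝ) (G : ℝ × ℝ → ℝ)
    (hG : ∀ r θ : ℝ, 0 < r → G (r * Real.cos θ, r * Real.sin θ) = r ^ 2 / (v θ) ^ 2)
    (θ x y : ℝ) (hx : 0 < x * Real.cos θ + y * Real.sin θ) :
    G (x, y) = (x ^ 2 + y ^ 2) /
      (v (θ + Real.arctan ((y * Real.cos θ - x * Real.sin θ) /
        (x * Real.cos θ + y * Real.sin θ)))) ^ 2 := by
  set c := Real.cos θ with hc
  set s := Real.sin θ with hs
  have hpyth : c ^ 2 + s ^ 2 = 1 := by rw [hc, hs]; rw [add_comm]; exact Real.sin_sq_add_cos_sq θ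
  set x' := x * c + y * s with hx'
  set y' := y * c - x * s with hy'
  have hsum : x' ^ 2 + y' ^ 2 = x ^ 2 + y ^ 2 := by
    rw [hx', hy']; nlinarith [hpyth]
  set ρ := Real.sqrt (x ^ 2 + y ^ 2) with hρ
  have hρpos : 0 < ρ := by
    apply Real.sqrt_pos.mpr
    nlinarith [sq_nonneg y', hx, hsum]
  have hρsq : ρ ^ 2 = x ^ 2 + y ^ 2 := Real.sq_sqrt (by positivity)
  set z := y' / x' with hz
  have h1z : Real.sqrt (1 + z ^ 2) = ρ / x' := by
    rw [hz]
    have : 1 + (y' / x') ^ 2 = (ρ / x') ^ 2 := by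
      field_simp
      nlinarith [hρsq, hsum]
    rw [this, Real.sqrt_sq (by positivity)]
  have hcosα : Real.cos (Real.arctan z) = x' / ρ := by
    rw [Real.cos_arctan, h1z, one_div_div]
  have hsinα : Real.sin (Real.arctan z) = y' / ρ := by
    rw [Real.sin_arctan, h1z, hz]
    field_simp
  have hxeq : ρ * Real.cos (θ + Real.arctan z) = x := by
    rw [Real.cos_add, hcosα, hsinα, ← hc, ← hs]
    field_simp
    rw [hx', hy']; ring_nf; linear_combination x * hpyth
  have hyeq : ρ * Real.sin (θ + Real.arctan z) = y := by
    rw [Real.sin_add, hcosα, hsinα, ← hc, ← hs]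
    field_simp
    rw [hx', hy']; ring_nf; linear_combination y * hpyth
  have := hG ρ (θ + Real.arctan z) hρpos
  rw [hxeq, hyeq] at this
  rw [this, hρsq]

private lemma innerD (v : ℝ → ℝ) (hv : Differentiable ℝ v) (hpos : ∀ x, 0 < v x)
    (r θ c sn s : ℝ) (hc : c = Real.cos θ) (hsn : sn = Real.sin θ) (hds : 0 < r + s*c) :
    HasDerivAt (fun t => ((r*c+s)^2 + (r*sn+t)^2) /
        (v (θ + Real.arctan ((t*c - s*sn)/(r+s*c+t*sn))))^2
    )
      (2*r*sn/(v (θ + Real.arctan (-(s*sn)/(r+s*c))))^2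
        - 2*(deriv v (θ + Real.arctan (-(s*sn)/(r+s*c))))*(r*c+s)
            /(v (θ + Real.arctan (-(s*sn)/(r+s*c))))^3) 0 := by
  have hpyth : c^2 + sn^2 = 1 := by
    rw [hc, hsn]; rw [add_comm]; exact Real.sin_sq_add_cos_sq θ
  have hne : r + s*c + 0*sn ≠ 0 := by simpa using ne_of_gt hds
  have hne' : (r + s*c) ≠ 0 := ne_of_gt hds
  have hkey : (r*c+s)^2 + (r*sn)^2 = (r+s*c)^2 + (s*sn)^2 := by
    linear_combination (r^2 - s^2) * hpyth
  have hNpos : 0 < (r*c+s)^2 + (r*sn)^2 := by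
    rw [hkey]; have := pow_pos hds 2; nlinarith [sq_nonneg (s*sn)]
  have hq : HasDerivAt (fun t : ℝ => (t*c - s*sn)/(r + s*c + t*sn))
      ((c*(r+s*c) + s*sn*sn)/(r+s*c)^2) 0 := by
    have h := HasDerivAt.div (((hasDerivAt_id (0:ℝ)).mul_const c).sub_const (s*sn))
      (((hasDerivAt_id (0:ℝ)).mul_const sn).const_add (r+s*c)) hne
    refine h.congr_deriv ?_
    norm_num
  have harc : HasDerivAt (fun t : ℝ => Real.arctan ((t*c - s*sn)/(r + s*c + t*sn)))
      ((r*c+s)/((r*c+s)^2+(r*sn)^2)) 0 := by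
    have h := hq.arctan
    convert h using 1
    have hnum : c*(r+s*c) + s*sn*sn = r*c+s := by linear_combination s*hpyth
    have hne'' : r + c*s ≠ 0 := by rwa [mul_comm] at hne'
    rw [hkey, hnum]
    norm_num
    field_simp
  set φs := θ + Real.arctan (-(s*sn)/(r+s*c)) with hφs
  have hg : HasDerivAt v (deriv v φs)
      ((fun t : ℝ => θ + Real.arctan ((t*c - s*sn)/(r + s*c + t*sn))) 0) := by
    have : (fun t : ℝ => θ + Real.arctan ((t*c - s*sn)/(r + s*c + t*sn))) 0 = φs := by
      norm_num [φs]
    rw [this]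
    exact (hv φs).hasDerivAt
  have hvA : HasDerivAt (fun t : ℝ => v (θ + Real.arctan ((t*c - s*sn)/(r + s*c + t*sn))))
      (deriv v φs * ((r*c+s)/((r*c+s)^2+(r*sn)^2))) 0 :=
    hg.comp 0 (harc.const_add θ)
  have hsq := hvA.pow 2
  have hN : HasDerivAt (fun t : ℝ => (r*c+s)^2 + (r*sn+t)^2)
      ((2:ℕ)*(r*sn+0)^1*1) 0 :=
    (((hasDerivAt_id (0:ℝ)).const_add (r*sn)).pow 2).const_add ((r*c+s)^2)
  have hVφ : v φs ≠ 0 := (hpos _).ne'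
  have hdiv := hN.div hsq (by exact pow_ne_zero 2 ((hpos _).ne'))
  refine hdiv.congr_deriv ?_
  have h0 : θ + Real.arctan ((0*c - s*sn)/(r + s*c + 0*sn)) = φs := by norm_num [φs]
  simp only [Pi.pow_apply, h0]
  have hNne : (r*c+s)^2 + (r*sn)^2 ≠ 0 := hNpos.ne'
  have hNne2 : (r*c+s)^2 + r^2*sn^2 ≠ 0 := by rw [← mul_pow]; exact hNpos.ne'
  norm_num
  field_simp

private lemma outerD (v : ℝ → ℝ) (hv : Differentiable ℝ v) (hpos : ∀ x, 0 < v x)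
    (r θ c sn : ℝ) (hv2 : DifferentiableAt ℝ (deriv v) θ) (hr : 0 < r) :
    HasDerivAt (fun s : ℝ => 2*r*sn/(v (θ + Real.arctan (-(s*sn)/(r+s*c))))^2
        - 2*(deriv v (θ + Real.arctan (-(s*sn)/(r+s*c))))*(r*c+s)
            /(v (θ + Real.arctan (-(s*sn)/(r+s*c))))^3)
      (4*sn^2*(deriv v θ)/(v θ)^3 + 2*c*sn*(deriv (deriv v) θ)/(v θ)^3
        - 2*(deriv v θ)/(v θ)^3 - 6*c*sn*(deriv v θ)^2/(v θ)^4) 0 := by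
  have hrne : r + 0*c ≠ 0 := by simpa using hr.ne'
  have hq : HasDerivAt (fun s : ℝ => -(s*sn)/(r+s*c))
      ((-(1*sn)*(r+0*c) - (-(0*sn))*(1*c))/(r+0*c)^2) 0 :=
    HasDerivAt.div (((hasDerivAt_id (0:ℝ)).mul_const sn).neg)
      (((hasDerivAt_id (0:ℝ)).mul_const c).const_add r) hrne
  have hφ : HasDerivAt (fun s : ℝ => θ + Real.arctan (-(s*sn)/(r+s*c))) (-sn/r) 0 := by
    have h := (hq.arctan).const_add θ
    refine h.congr_deriv ?_
    norm_num
    field_simp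
  have h00 : (fun s : ℝ => θ + Real.arctan (-(s*sn)/(r+s*c))) 0 = θ := by norm_num
  have hgv : HasDerivAt v (deriv v θ)
      ((fun s : ℝ => θ + Real.arctan (-(s*sn)/(r+s*c))) 0) := by
    rw [h00]; exact (hv θ).hasDerivAt
  have hgdv : HasDerivAt (deriv v) (deriv (deriv v) θ)
      ((fun s : ℝ => θ + Real.arctan (-(s*sn)/(r+s*c))) 0) := by
    rw [h00]; exact hv2.hasDerivAt
  have hvφ : HasDerivAt (fun s : ℝ => v (θ + Real.arctan (-(s*sn)/(r+s*c))))
      (deriv v θ * (-sn/r)) 0 := hgv.comp 0 hφ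
  have hdvφ : HasDerivAt (fun s : ℝ => deriv v (θ + Real.arctan (-(s*sn)/(r+s*c))))
      (deriv (deriv v) θ * (-sn/r)) 0 := by exact hgdv.comp 0 hφ
  have hterm1 := (hasDerivAt_const (0:ℝ) (2*r*sn)).div (hvφ.pow 2)
    (by simpa [h00] using pow_ne_zero 2 ((hpos θ).ne'))
  have hterm2 := ((hdvφ.const_mul 2).mul ((hasDerivAt_id (0:ℝ)).const_add (r*c))).div
    (hvφ.pow 3) (by simpa [h00] using pow_ne_zero 3 ((hpos θ).ne'))
  have hD := hterm1.sub hterm2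
  refine hD.congr_deriv ?_
  simp only [h00]
  have hvθ := (hpos θ).ne'
  norm_num
  field_simp
  ring

/-- In Cartesian coordinates,
`g_w(e₁,e₂) = (1/v²)(−cos(2θ) v'/v − (1/2) sin(2θ)(3 v'²/v² − v''/v))`. -/
theorem fundTensor_e1_e2
    (v : ℝ → ℝ) (hv : ContDiff ℝ 2 v) (hper : ∀ θ, v (θ + 2 * Real.pi) = v θ)
    (hpos : ∀ θ, 0 < v θ) (G : ℝ × ℝ → ℝ)
    (hG : ∀ r θ : ℝ, 0 < r → G (r * Real.cos θ, r * Real.sin θ) = r ^ 2 / (v θ) ^ 2)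
    (hG0 : G 0 = 0) :
    ∀ r θ : ℝ, 0 < r →
      fundTensor G (r * Real.cos θ, r * Real.sin θ) (1, 0) (0, 1) =
        (1 / (v θ) ^ 2) *
          (-Real.cos (2 * θ) * (deriv v θ / v θ)
            - (1 / 2) * Real.sin (2 * θ) *
                (3 * (deriv v θ) ^ 2 / (v θ) ^ 2 - deriv (deriv v) θ / v θ)) := by
  intro r θ hr
  have hv1 : Differentiable ℝ v := hv.differentiable (by norm_num)
  have hv2 : DifferentiableAt ℝ (deriv v) θ := by
    have h1 : ContDiff ℝ 1 (deriv v) := by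
      have := (contDiff_succ_iff_deriv (n := 1)).mp (by exact_mod_cast hv)
      exact this.2.2
    exact (h1.differentiable (by norm_num)) θ
  set c := Real.cos θ with hc
  set sn := Real.sin θ with hsn
  have hpyth : c^2 + sn^2 = 1 := by
    rw [hc, hsn]; rw [add_comm]; exact Real.sin_sq_add_cos_sq θ
  have hpt : ∀ s t : ℝ, ((r*c, r*sn) : ℝ × ℝ) + s • ((1:ℝ),(0:ℝ)) + t • ((0:ℝ),(1:ℝ))
      = (r*c+s, r*sn+t) := by
    intro s t; simp [Prod.ext_iff]
  have hGF : ∀ s t : ℝ, 0 < r + s*c + t*sn →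
      G (r*c+s, r*sn+t) = ((r*c+s)^2 + (r*sn+t)^2) /
        (v (θ + Real.arctan ((t*c - s*sn)/(r+s*c+t*sn))))^2 := by
    intro s t hpos'
    have hd : (r*c+s)*c + (r*sn+t)*sn = r + s*c + t*sn := by
      rw [hc, hsn]; ring_nf; linear_combination r * hpyth
    have hnum : (r*sn+t)*c - (r*c+s)*sn = t*c - s*sn := by ring
    have := Gval' v G hG θ (r*c+s) (r*sn+t) (by rw [← hc, ← hsn, hd]; exact hpos')
    rw [← hc, ← hsn] at this
    rw [this, hd, hnum]
  -- D s : the inner derivative as an explicit function of s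
  set D : ℝ → ℝ := fun s => 2*r*sn/(v (θ + Real.arctan (-(s*sn)/(r+s*c))))^2
        - 2*(deriv v (θ + Real.arctan (-(s*sn)/(r+s*c))))*(r*c+s)
            /(v (θ + Real.arctan (-(s*sn)/(r+s*c))))^3 with hD
  have habs_c : |c| ≤ 1 := by rw [hc]; exact Real.abs_cos_le_one θ
  have habs_sn : |sn| ≤ 1 := by rw [hsn]; exact Real.abs_sin_le_one θ
  have houter : (fun s : ℝ => deriv (fun t : ℝ =>
      G (((r*c, r*sn) : ℝ × ℝ) + s • ((1:ℝ),(0:ℝ)) + t • ((0:ℝ),(1:ℝ)))) 0) =ᶠ[nhds 0] D := by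
    filter_upwards [Metric.ball_mem_nhds (0:ℝ) (by positivity : (0:ℝ) < r/2)] with s hs
    rw [Metric.mem_ball, Real.dist_eq, sub_zero] at hs
    have hsc : |s*c| ≤ |s| := by
      rw [abs_mul]; exact mul_le_of_le_one_right (abs_nonneg s) habs_c
    have hds : 0 < r + s*c := by
      have h1 := neg_abs_le (s*c)
      linarith [abs_nonneg s, hsc]
    have hev : (fun t : ℝ =>
        G (((r*c, r*sn) : ℝ × ℝ) + s • ((1:ℝ),(0:ℝ)) + t • ((0:ℝ),(1:ℝ)))) =ᶠ[nhds 0]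
        (fun t => ((r*c+s)^2 + (r*sn+t)^2) /
          (v (θ + Real.arctan ((t*c - s*sn)/(r+s*c+t*sn))))^2) := by
      filter_upwards [Metric.ball_mem_nhds (0:ℝ) (half_pos hds)] with t ht
      rw [Metric.mem_ball, Real.dist_eq, sub_zero] at ht
      have htsn : |t*sn| ≤ |t| := by
        rw [abs_mul]; exact mul_le_of_le_one_right (abs_nonneg t) habs_sn
      have hds2 : 0 < r + s*c + t*sn := by
        have h1 := neg_abs_le (t*sn)
        linarith
      rw [hpt s t, hGF s t hds2]
    rw [hev.deriv_eq]
    exact (innerD v hv1 hpos r θ c sn s hc hsn hds).deriv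
  have hDd := outerD v hv1 hpos r θ c sn hv2 hr
  have hderiv : deriv (fun s : ℝ => deriv (fun t : ℝ =>
      G (((r*c, r*sn) : ℝ × ℝ) + s • ((1:ℝ),(0:ℝ)) + t • ((0:ℝ),(1:ℝ)))) 0) 0
      = 4*sn^2*(deriv v θ)/(v θ)^3 + 2*c*sn*(deriv (deriv v) θ)/(v θ)^3
        - 2*(deriv v θ)/(v θ)^3 - 6*c*sn*(deriv v θ)^2/(v θ)^4 := by
    rw [houter.deriv_eq]
    exact hDd.deriv
  show (1/2) * _ = _
  rw [hderiv]
  rw [Real.cos_two_mul, Real.sin_two_mul, ← hc, ← hsn]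
  have hvθ : v θ ≠ 0 := (hpos θ).ne'
  field_simp
  ring_nf
  linear_combination (4 * v θ * deriv v θ) * hpyth
end

section
/- Let v : ℝ → ℝ be twice continuously differentiable, 2π-periodic and everywhere positive, and define G : ℝ² → ℝ by G(w) = r²/v(θ)² whenever w = r·(cos θ, sin θ) with r > 0 (and G(0) = 0). For w = r·(cos θ, sin θ) with r > 0, the fundamental tensor g_w(u₁,u₂) := (1/2)·∂²/∂s∂t [G(w + s·u₁ + t·u₂)]|_{s=t=0} evaluated on the standard basis vector e₂ = (0,1) satisfies g_w(e₂, e₂) = (1/v(θ)²)·(1 − sin(2θ)·v'(θ)/v(θ) + cos²θ·(3·v'(θ)²/v(θ)² − v''(θ)/v(θ))). -/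
set_option maxHeartbeats 1000000


open Real


private lemma angle_eq_of (α β : ℝ) (hc : Real.cos α = Real.cos β)
    (hs : Real.sin α = Real.sin β) : ∃ n : ℤ, α = β + n * (2 * Real.pi) := by
  have h : Complex.exp (α * Complex.I) = Complex.exp (β * Complex.I) := by
    rw [Complex.exp_mul_I, Complex.exp_mul_I, ← Complex.ofReal_cos, ← Complex.ofReal_cos,
      ← Complex.ofReal_sin, ← Complex.ofReal_sin, hc, hs]
  obtain ⟨n, hn⟩ := Complex.exp_eq_exp_iff_exists_int.mp h
  refine ⟨n, ?_⟩
  have h2 : ((α : ℂ) - (β + n * (2 * Real.pi))) * Complex.I = 0 := by linear_combination hn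
  rcases mul_eq_zero.mp h2 with h3 | h3
  · have : ((α : ℂ)) = ((β + n * (2 * Real.pi) : ℝ) : ℂ) := by push_cast; linear_combination h3
    exact_mod_cast this
  · exact absurd h3 Complex.I_ne_zero

/-- In Cartesian coordinates,
`g_w(e₂,e₂) = (1/v²)(1 − sin(2θ) v'/v + cos²θ (3 v'²/v² − v''/v))`. -/
theorem fundTensor_e2_e2
    (v : ℝ → ℝ) (hv : ContDiff ℝ 2 v) (hper : ∀ θ, v (θ + 2 * Real.pi) = v θ)
    (hpos : ∀ θ, 0 < v θ) (G : ℝ × ℝ → ℝ)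
    (hG : ∀ r θ : ℝ, 0 < r → G (r * Real.cos θ, r * Real.sin θ) = r ^ 2 / (v θ) ^ 2)
    (hG0 : G 0 = 0) :
    ∀ r θ : ℝ, 0 < r →
      fundTensor G (r * Real.cos θ, r * Real.sin θ) (0, 1) (0, 1) =
        (1 / (v θ) ^ 2) *
          (1 - Real.sin (2 * θ) * (deriv v θ / v θ)
            + Real.cos θ ^ 2 *
                (3 * (deriv v θ) ^ 2 / (v θ) ^ 2 - deriv (deriv v) θ / v θ)) := by
  intro r θ hr
  have hv0 : ∀ x, v x ≠ 0 := fun x => (hpos x).ne'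
  have hdv : Differentiable ℝ v := hv.differentiable (by norm_num)
  have hdv' : Differentiable ℝ (deriv v) := by
    have h2 : ContDiff ℝ (1 + 1) v := by norm_num; exact hv
    exact ((contDiff_succ_iff_deriv.mp h2).2.2).differentiable (by norm_num)
  set a := r * Real.cos θ with ha_def
  set b := r * Real.sin θ with hb_def
  set φ : ℝ → ℝ := fun x => G (a, b + x) with hφ_def
  -- Reduction of fundTensor to second derivative of φ
  have key : ∀ s t : ℝ, ((a, b) : ℝ × ℝ) + s • ((0 : ℝ), (1 : ℝ)) + t • ((0 : ℝ), (1 : ℝ))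
      = (a, b + (s + t)) := by
    intro s t
    simp [Prod.ext_iff]
    ring
  have hred : fundTensor G (a, b) (0, 1) (0, 1) = (1 / 2) * deriv (deriv φ) 0 := by
    unfold fundTensor
    congr 1
    have hfun : (fun s : ℝ => deriv
        (fun t : ℝ => G (((a, b) : ℝ × ℝ) + s • ((0 : ℝ), (1 : ℝ)) + t • ((0:ℝ),(1:ℝ)))) 0)
        = fun s => deriv φ s := by
      funext s
      have h1 : (fun t : ℝ => G (((a, b) : ℝ × ℝ) + s • ((0:ℝ),(1:ℝ)) + t • ((0:ℝ),(1:ℝ))))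
          = fun t => φ (s + t) := by
        funext t
        rw [key]
      rw [h1, deriv_comp_const_add, add_zero]
    rw [hfun]
  rw [hred]
  -- case split
  by_cases ha : a = 0
  · -- degenerate case: cos θ = 0
    have hcos : Real.cos θ = 0 := by
      have : r * Real.cos θ = 0 := ha
      rcases mul_eq_zero.mp this with h | h
      · exact absurd h hr.ne'
      · exact h
    have hsin : Real.sin θ = 1 ∨ Real.sin θ = -1 := by
      have h1 : (Real.sin θ - 1) * (Real.sin θ + 1) = 0 := by
        nlinarith [Real.sin_sq_add_cos_sq θ]
      rcases mul_eq_zero.mp h1 with h | h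
      · left; linarith
      · right; linarith
    set ψ : ℝ → ℝ := fun x => (b + x) ^ 2 / (v θ) ^ 2 with hψ_def
    have hloc : ∀ x ∈ Metric.ball (0 : ℝ) r, φ x = ψ x := by
      intro x hx
      have hx' : |x| < r := by simpa [Real.dist_eq] using hx
      rcases hsin with h1 | h1
      · have hb : b = r := by rw [hb_def, h1, mul_one]
        have hpos' : 0 < b + x := by
          rw [hb]
          cases abs_lt.mp hx' with
          | intro hl hu => linarith
        have := hG (b + x) θ hpos'
        rw [hcos, h1] at this
        simpa [hφ_def, ha, hψ_def] using this
      · have hb : b = -r := by rw [hb_def, h1]; ring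
        have hpos' : 0 < -(b + x) := by
          rw [hb]
          cases abs_lt.mp hx' with
          | intro hl hu => linarith
        have := hG (-(b + x)) θ hpos'
        rw [hcos, h1] at this
        have heq : ((-(b+x)) * 0, -(b+x) * (-1)) = ((a : ℝ), b + x) := by
          simp [ha]
        rw [heq] at this
        rw [hφ_def]
        simp only
        rw [this, hψ_def]
        ring_nf
    have hball : Metric.ball (0 : ℝ) r ∈ nhds (0 : ℝ) :=
      Metric.isOpen_ball.mem_nhds (by simpa using hr)
    have hd1 : ∀ x ∈ Metric.ball (0 : ℝ) r, deriv φ x = deriv ψ x := by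
      intro x hx
      have hev : φ =ᶠ[nhds x] ψ :=
        Filter.eventually_of_mem (Metric.isOpen_ball.mem_nhds hx) hloc
      exact hev.deriv_eq
    have hev2 : deriv φ =ᶠ[nhds 0] deriv ψ := Filter.eventually_of_mem hball hd1
    rw [hev2.deriv_eq]
    have hψ' : ∀ x : ℝ, HasDerivAt ψ (2 * (b + x) / (v θ) ^ 2) x := by
      intro x
      have h0 : HasDerivAt (fun x : ℝ => b + x) 1 x := (hasDerivAt_id x).const_add b
      have h1 : HasDerivAt (fun x : ℝ => (b + x) ^ 2) (2 * (b + x) ^ 1 * 1) x := h0.pow 2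
      have h2 := h1.div_const ((v θ) ^ 2)
      refine HasDerivAt.congr_deriv h2 (Eq.symm ?_)
      ring
    have hdψ : deriv ψ = fun x => 2 * (b + x) / (v θ) ^ 2 := funext fun x => (hψ' x).deriv
    rw [hdψ]
    have h3 : HasDerivAt (fun x : ℝ => 2 * (b + x) / (v θ) ^ 2) (2 / (v θ) ^ 2) 0 := by
      have h0 : HasDerivAt (fun x : ℝ => b + x) 1 0 := (hasDerivAt_id 0).const_add b
      have h1 := (h0.const_mul 2).div_const ((v θ) ^ 2)
      refine HasDerivAt.congr_deriv h1 (Eq.symm ?_)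
      ring
    rw [h3.deriv, Real.sin_two_mul, hcos]
    field_simp
    ring
  · -- main case : a ≠ 0
    have hab : a ^ 2 + b ^ 2 = r ^ 2 := by
      rw [ha_def, hb_def]; nlinarith [Real.sin_sq_add_cos_sq θ]
    set c : ℝ := if 0 < a then 0 else π with hc_def
    set Ψ : ℝ → ℝ := fun x => Real.arctan ((b + x) / a) + c with hΨ_def
    have hF1 : ∀ x : ℝ, Real.sqrt (a ^ 2 + (b + x) ^ 2) * Real.cos (Ψ x) = a ∧
        Real.sqrt (a ^ 2 + (b + x) ^ 2) * Real.sin (Ψ x) = b + x := by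
      intro x
      set t := (b + x) / a with ht_def
      have htx : b + x = a * t := by rw [ht_def]; field_simp
      have hsq : a ^ 2 + (b + x) ^ 2 = a ^ 2 * (1 + t ^ 2) := by rw [htx]; ring
      have hst : (0:ℝ) < 1 + t ^ 2 := by positivity
      have hsqrt : Real.sqrt (a ^ 2 + (b + x) ^ 2) = |a| * Real.sqrt (1 + t ^ 2) := by
        rw [hsq, Real.sqrt_mul (sq_nonneg a), Real.sqrt_sq_eq_abs]
      have hcos := Real.cos_arctan t
      have hsin := Real.sin_arctan t
      have hs0 : Real.sqrt (1 + t ^ 2) ≠ 0 := by positivity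
      have hΨx : Ψ x = Real.arctan t + c := by rw [hΨ_def]
      by_cases hA : 0 < a
      · have hc0 : c = 0 := if_pos hA
        rw [hΨx, hc0, add_zero, hsqrt, htx, hcos, hsin, abs_of_pos hA]
        constructor
        · field_simp
        · field_simp
      · have hA' : a < 0 := lt_of_le_of_ne (not_lt.mp hA) ha
        have hc0 : c = π := if_neg hA
        rw [hΨx, hc0, Real.cos_add_pi, Real.sin_add_pi, hsqrt, htx, hcos, hsin,
          abs_of_neg hA']
        constructor
        · field_simp
        · field_simp
    have hr2 : Real.sqrt (a ^ 2 + (b + 0) ^ 2) = r := by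
      rw [add_zero, hab, Real.sqrt_sq hr.le]
    obtain ⟨hc1, hs1⟩ := hF1 0
    rw [hr2] at hc1 hs1
    have hcc : Real.cos θ = Real.cos (Ψ 0) :=
      mul_left_cancel₀ hr.ne' (by rw [hc1, ← ha_def])
    have hss : Real.sin θ = Real.sin (Ψ 0) :=
      mul_left_cancel₀ hr.ne' (by rw [hs1, ← hb_def, add_zero])
    obtain ⟨n, hn⟩ := angle_eq_of θ (Ψ 0) hcc hss
    set η : ℝ → ℝ := fun x => θ + (Real.arctan ((b + x) / a) - Real.arctan (b / a))
      with hη_def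
    have hΨ0 : Ψ 0 = Real.arctan (b / a) + c := by rw [hΨ_def]; norm_num
    have hηΨ : ∀ x, η x = Ψ x + n * (2 * π) := by
      intro x
      rw [hη_def, hΨ_def]
      simp only
      rw [hn, hΨ0]
      ring
    have hper' : Function.Periodic v (2 * π) := hper
    have hvη : ∀ x, v (η x) = v (Ψ x) := by
      intro x
      rw [hηΨ x]
      exact (hper'.int_mul n) (Ψ x)
    have hφeq : φ = fun x => (a ^ 2 + (b + x) ^ 2) / (v (η x)) ^ 2 := by
      funext x
      obtain ⟨hcx, hsx⟩ := hF1 x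
      have hpos2 : (0:ℝ) < a ^ 2 + (b + x) ^ 2 := by positivity
      have hRpos : 0 < Real.sqrt (a ^ 2 + (b + x) ^ 2) := Real.sqrt_pos.mpr hpos2
      have hGx := hG (Real.sqrt (a ^ 2 + (b + x) ^ 2)) (Ψ x) hRpos
      rw [hcx, hsx] at hGx
      rw [hφ_def]
      simp only
      rw [hGx, Real.sq_sqrt hpos2.le, hvη]
    have hη' : ∀ x : ℝ, HasDerivAt η (a / (a ^ 2 + (b + x) ^ 2)) x := by
      intro x
      have h0 : HasDerivAt (fun x : ℝ => (b + x) / a) (1 / a) x := by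
        simpa using ((hasDerivAt_id x).const_add b).div_const a
      have h1 : HasDerivAt (fun x : ℝ => Real.arctan ((b + x) / a))
          (1 / (1 + ((b + x) / a) ^ 2) * (1 / a)) x := h0.arctan
      have h2 := (h1.sub_const (Real.arctan (b / a))).const_add θ
      refine HasDerivAt.congr_deriv h2 (Eq.symm ?_)
      have hpos2 : (0:ℝ) < a ^ 2 + (b + x) ^ 2 := by positivity
      rw [eq_comm, mul_comm, div_mul_eq_div_div, eq_div_iff hpos2.ne']
      field_simp
      have hcθ : Real.cos θ ≠ 0 := fun h => ha (by rw [ha_def, h, mul_zero])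
      rw [ha_def]
      field_simp
    have hw1 : ∀ x : ℝ, HasDerivAt (fun x => v (η x))
        (deriv v (η x) * (a / (a ^ 2 + (b + x) ^ 2))) x := by
      intro x
      exact ((hdv (η x)).hasDerivAt).comp x (hη' x)
    have hNum : ∀ x : ℝ, HasDerivAt (fun x : ℝ => a ^ 2 + (b + x) ^ 2) (2 * (b + x)) x := by
      intro x
      have h0 : HasDerivAt (fun x : ℝ => b + x) 1 x := (hasDerivAt_id x).const_add b
      have h1 := (h0.pow 2).const_add (a ^ 2)
      refine HasDerivAt.congr_deriv h1 (Eq.symm ?_)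
      ring
    set φ1 : ℝ → ℝ := fun x =>
      2 * (b + x) / (v (η x)) ^ 2 - 2 * a * deriv v (η x) / (v (η x)) ^ 3 with hφ1_def
    have hφ' : ∀ x : ℝ, HasDerivAt φ (φ1 x) x := by
      intro x
      have hden := (hw1 x).pow 2
      have hd0 : ((fun x => v (η x)) x) ^ 2 ≠ 0 := pow_ne_zero _ (hv0 _)
      have h2 := (hNum x).div hden hd0
      rw [hφeq]
      refine HasDerivAt.congr_deriv h2 (Eq.symm ?_)
      rw [hφ1_def]
      simp only
      simp only [Pi.pow_apply]
      have hpos2 : (0:ℝ) < a ^ 2 + (b + x) ^ 2 := by positivity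
      have hV : v (η x) ≠ 0 := hv0 _
      generalize v (η x) = V at hV ⊢
      generalize deriv v (η x) = V'
      generalize hPd : a ^ 2 + (b + x) ^ 2 = P at hpos2 ⊢
      generalize b + x = y
      field_simp
      ring
    have hdφ : deriv φ = φ1 := funext fun x => (hφ' x).deriv
    rw [hdφ]
    -- second derivative at 0
    have hA : HasDerivAt (fun x : ℝ => 2 * (b + x) / (v (η x)) ^ 2)
        ((2 * 1 * ((v (η 0)) ^ 2) - 2 * (b + 0) *
          (2 * (v (η 0)) ^ 1 * (deriv v (η 0) * (a / (a ^ 2 + (b + 0) ^ 2)))))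
          / ((v (η 0)) ^ 2) ^ 2) 0 := by
      have h0 : HasDerivAt (fun x : ℝ => 2 * (b + x)) (2 * 1) 0 :=
        ((hasDerivAt_id 0).const_add b).const_mul 2
      exact h0.div ((hw1 0).pow 2) (pow_ne_zero _ (hv0 _))
    have hBnum : HasDerivAt (fun x : ℝ => 2 * a * deriv v (η x))
        (2 * a * (deriv (deriv v) (η 0) * (a / (a ^ 2 + (b + 0) ^ 2)))) 0 := by
      exact (((hdv' (η 0)).hasDerivAt).comp 0 (hη' 0)).const_mul (2 * a)
    have hB : HasDerivAt (fun x : ℝ => 2 * a * deriv v (η x) / (v (η x)) ^ 3)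
        ((2 * a * (deriv (deriv v) (η 0) * (a / (a ^ 2 + (b + 0) ^ 2))) * ((v (η 0)) ^ 3)
          - 2 * a * deriv v (η 0) *
            (3 * (v (η 0)) ^ 2 * (deriv v (η 0) * (a / (a ^ 2 + (b + 0) ^ 2)))))
          / ((v (η 0)) ^ 3) ^ 2) 0 := by
      exact hBnum.div ((hw1 0).pow 3) (pow_ne_zero _ (hv0 _))
    have hAB := hA.sub hB
    have hd2 := hAB.deriv
    rw [hφ1_def]
    erw [hd2]
    have hη0 : η 0 = θ := by rw [hη_def]; simp
    rw [hη0]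
    simp only [add_zero]
    rw [hab, Real.sin_two_mul, ha_def, hb_def]
    have hvθ := hv0 θ
    have hr0 : r ≠ 0 := hr.ne'
    generalize v θ = V at hvθ ⊢
    generalize deriv v θ = V1
    generalize deriv (deriv v) θ = V2
    generalize Real.cos θ = C
    generalize Real.sin θ = S
    field_simp
    ring
end

section
/- Let a, b ∈ ℝ with a ≠ 0 and b ≠ 0, and define u : ℝ → ℝ by u(θ) = √(h(θ/2)), where h(φ) = |cos φ|³/|a|³ + sin²φ/b². Then u is twice continuously differentiable on all of ℝ (in particular, the absolute-value terms do not destroy C² regularity). -/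
open Filter Real Topology

lemma hasDerivAt_mul_abs (x : ℝ) : HasDerivAt (fun y : ℝ => y * |y|) (2 * |x|) x := by
  rcases lt_trichotomy x 0 with hx | hx | hx
  · have h1 : HasDerivAt (fun y : ℝ => -(y ^ 2)) (2 * |x|) x := by
      have := (hasDerivAt_pow 2 x).fun_neg
      simpa [abs_of_neg hx] using this.congr_deriv (by push_cast; ring)
    refine h1.congr_of_eventuallyEq ?_
    filter_upwards [gt_mem_nhds hx] with y hy
    rw [abs_of_neg hy]; ring
  · subst hx
    rw [hasDerivAt_iff_tendsto_slope]
    have habs : Tendsto (fun y : ℝ => |y|) (𝓝[≠] (0:ℝ)) (𝓝 (2 * |(0:ℝ)|)) := by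
      simpa using (continuous_abs.tendsto (0:ℝ)).mono_left nhdsWithin_le_nhds
    refine habs.congr' ?_
    filter_upwards [self_mem_nhdsWithin] with y hy
    simp only [Set.mem_compl_iff, Set.mem_singleton_iff] at hy
    simp only [slope_def_field, abs_zero, mul_zero, sub_zero]
    rw [eq_div_iff hy]; ring
  · have h1 : HasDerivAt (fun y : ℝ => y ^ 2) (2 * |x|) x := by
      have := hasDerivAt_pow 2 x
      simpa [abs_of_pos hx] using this.congr_deriv (by push_cast; ring)
    refine h1.congr_of_eventuallyEq ?_
    filter_upwards [lt_mem_nhds hx] with y hy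
    rw [abs_of_pos hy]; ring

lemma hasDerivAt_abs_cube (x : ℝ) :
    HasDerivAt (fun y : ℝ => |y| ^ 3) (3 * (x * |x|)) x := by
  have h1 := (hasDerivAt_id x).mul (hasDerivAt_mul_abs x)
  have he : (fun y : ℝ => |y| ^ 3) = fun y => y * (y * |y|) := by
    funext y
    rw [pow_succ, sq_abs]; ring
  rw [he]
  exact h1.congr_deriv (by simp only [id_eq]; ring)

lemma contDiff_abs_cube : ContDiff ℝ 2 (fun x : ℝ => |x| ^ 3) := by
  have hd1 : deriv (fun x : ℝ => |x| ^ 3) = fun x => 3 * (x * |x|) := by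
    funext x; exact (hasDerivAt_abs_cube x).deriv
  have hd2 : deriv (fun x : ℝ => 3 * (x * |x|)) = fun x => 3 * (2 * |x|) := by
    funext x; exact ((hasDerivAt_mul_abs x).const_mul 3).deriv
  rw [show (2 : WithTop ℕ∞) = 1 + 1 by norm_num, contDiff_succ_iff_deriv]
  refine ⟨fun x => (hasDerivAt_abs_cube x).differentiableAt, by simp, ?_⟩
  rw [hd1, contDiff_one_iff_deriv]
  exact ⟨fun x => ((hasDerivAt_mul_abs x).const_mul 3).differentiableAt,
    hd2 ▸ (continuous_const.mul (continuous_const.mul continuous_abs))⟩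

/-- For `a, b ≠ 0`, the function
`u(θ) = √(h(θ/2))`, with `h(φ) = |cos φ|³/|a|³ + sin²φ/b²`, is twice continuously
differentiable on all of `ℝ`. -/
theorem gielis_u_contDiff (a b : ℝ) (ha : a ≠ 0) (hb : b ≠ 0) (h u : ℝ → ℝ)
    (hh : ∀ φ, h φ = |Real.cos φ| ^ 3 / |a| ^ 3 + Real.sin φ ^ 2 / b ^ 2)
    (hu : ∀ θ, u θ = Real.sqrt (h (θ / 2))) :
    ContDiff ℝ 2 u := by
  have hhe : h = fun φ => |Real.cos φ| ^ 3 / |a| ^ 3 + Real.sin φ ^ 2 / b ^ 2 := funext hh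
  have hh2 : ContDiff ℝ 2 h := by
    rw [hhe]
    exact ((contDiff_abs_cube.comp Real.contDiff_cos).div_const _).add
      ((Real.contDiff_sin.pow 2).div_const _)
  have hpos : ∀ φ, 0 < h φ := by
    intro φ
    rw [hh φ]
    rcases eq_or_ne (Real.cos φ) 0 with hc | hc
    · have hs : Real.sin φ ^ 2 = 1 := by
        have := Real.sin_sq_add_cos_sq φ
        rw [hc] at this; linarith
      have : 0 < Real.sin φ ^ 2 / b ^ 2 := by
        rw [hs]; positivity
      have h0 : 0 ≤ |Real.cos φ| ^ 3 / |a| ^ 3 := by positivity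
      linarith
    · have : 0 < |Real.cos φ| ^ 3 / |a| ^ 3 := by
        have : 0 < |Real.cos φ| := abs_pos.mpr hc
        positivity
      have h0 : 0 ≤ Real.sin φ ^ 2 / b ^ 2 := by positivity
      linarith
  have hue : u = fun θ => Real.sqrt (h (θ / 2)) := funext hu
  rw [hue, contDiff_iff_contDiffAt]
  intro θ
  exact (Real.contDiffAt_sqrt (hpos (θ / 2)).ne').comp θ
    (hh2.contDiffAt.comp θ (contDiffAt_id.div_const 2))
end

section
/- Let a, b ∈ ℝ with a ≠ 0 and b ≠ 0, h(φ) = |cos φ|³/|a|³ + sin²φ/b², and u(θ) = √(h(θ/2)). Then u''(θ) + u(θ) > 0 for every θ ∈ ℝ. Consequently, the figure defined in polar coordinates by Gielis superformula with parameters m = 2, n₁ = 2, n₂ = 3, n₃ = 2 (i.e. the curve r = v(θ) with v = 1/u) is strongly convex for all a, b ∈ ℝ∖{0}. -/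
section GielisAux

/-- `x ↦ x √(x²)` (i.e. `x|x|`) is differentiable with derivative `2√(x²) = 2|x|`. -/
lemma gielis_hasDerivAt_sqrt_sq {x : ℝ} (hx : x ≠ 0) :
    HasDerivAt (fun y : ℝ => Real.sqrt (y ^ 2)) (x / Real.sqrt (x ^ 2)) x := by
  have h1 : HasDerivAt (fun y : ℝ => y ^ 2) (2 * x) x := by
    simpa using (hasDerivAt_pow 2 x)
  have hne : ((fun y : ℝ => y ^ 2) x) ≠ 0 := by positivity
  have h2 := h1.sqrt hne
  convert h2 using 1
  have hs : Real.sqrt (x ^ 2) ≠ 0 := by positivity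
  field_simp

lemma gielis_hasDerivAt_w (x : ℝ) :
    HasDerivAt (fun y : ℝ => y * Real.sqrt (y ^ 2)) (2 * Real.sqrt (x ^ 2)) x := by
  rcases eq_or_ne x 0 with rfl | hx
  · rw [hasDerivAt_iff_tendsto_slope]
    have key : ∀ z : ℝ, z ≠ 0 →
        slope (fun y : ℝ => y * Real.sqrt (y ^ 2)) 0 z = Real.sqrt (z ^ 2) := by
      intro z hz
      rw [slope_def_field]
      field_simp
      ring
    have hcont : Filter.Tendsto (fun z : ℝ => Real.sqrt (z ^ 2)) (nhdsWithin 0 {(0:ℝ)}ᶜ)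
        (nhds (2 * Real.sqrt ((0:ℝ) ^ 2))) := by
      have h0 : Filter.Tendsto (fun z : ℝ => Real.sqrt (z ^ 2)) (nhds 0)
          (nhds (Real.sqrt ((0:ℝ) ^ 2))) :=
        (Real.continuous_sqrt.comp (continuous_pow 2)).tendsto 0
      have : Real.sqrt ((0:ℝ) ^ 2) = 2 * Real.sqrt ((0:ℝ) ^ 2) := by simp
      rw [← this]
      exact h0.mono_left nhdsWithin_le_nhds
    refine hcont.congr' ?_
    filter_upwards [self_mem_nhdsWithin] with z hz
    exact (key z hz).symm
  · have := (hasDerivAt_id x).mul (gielis_hasDerivAt_sqrt_sq hx)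
    refine this.congr_deriv ?_
    have hs : Real.sqrt (x ^ 2) ≠ 0 := by positivity
    have hsq : Real.sqrt (x ^ 2) ^ 2 = x ^ 2 := Real.sq_sqrt (by positivity)
    simp only [id]
    field_simp
    nlinarith [hsq]

noncomputable def gielisH0 (A B φ : ℝ) : ℝ :=
  (Real.cos φ ^ 2) ^ ((3:ℝ)/2) / A + Real.sin φ ^ 2 / B
noncomputable def gielisH1 (A B φ : ℝ) : ℝ :=
  (-3 * (Real.cos φ * Real.sqrt (Real.cos φ ^ 2)) * Real.sin φ) / A
    + (2 * Real.sin φ * Real.cos φ) / B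
noncomputable def gielisH2 (A B φ : ℝ) : ℝ :=
  (6 * Real.sqrt (Real.cos φ ^ 2) * Real.sin φ ^ 2
      - 3 * Real.cos φ ^ 2 * Real.sqrt (Real.cos φ ^ 2)) / A
    + (2 * Real.cos φ ^ 2 - 2 * Real.sin φ ^ 2) / B

lemma gielis_sq_rpow_three_halves (x : ℝ) : (x ^ 2 : ℝ) ^ ((3:ℝ)/2) = |x| ^ 3 := by
  rw [show ((3:ℝ)/2) = (1/2) * 3 by norm_num, Real.rpow_mul (sq_nonneg x),
    ← Real.sqrt_eq_rpow, Real.sqrt_sq_eq_abs,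
    show (3:ℝ) = ((3:ℕ):ℝ) by norm_num, Real.rpow_natCast]

lemma gielisH0_pos {A B : ℝ} (hA : 0 < A) (hB : 0 < B) (φ : ℝ) : 0 < gielisH0 A B φ := by
  unfold gielisH0
  rcases eq_or_ne (Real.cos φ) 0 with hc | hc
  · have hs : Real.sin φ ^ 2 = 1 := by
      have := Real.sin_sq_add_cos_sq φ
      nlinarith
    rw [hc, hs]
    have h1 : ((0:ℝ) ^ 2) ^ ((3:ℝ)/2) = 0 := by
      rw [show ((0:ℝ) ^ 2) = 0 by norm_num, Real.zero_rpow (by norm_num)]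
    rw [h1]
    positivity
  · have h1 : 0 < (Real.cos φ ^ 2) ^ ((3:ℝ)/2) :=
      Real.rpow_pos_of_pos (by positivity) _
    positivity

lemma gielis_hasDerivAt_H0 (A B φ : ℝ) : HasDerivAt (gielisH0 A B) (gielisH1 A B φ) φ := by
  have hc : HasDerivAt (fun φ => Real.cos φ ^ 2) (2 * Real.cos φ ^ 1 * (-Real.sin φ)) φ :=
    (Real.hasDerivAt_cos φ).pow 2
  have h1 : HasDerivAt (fun φ => (Real.cos φ ^ 2) ^ ((3:ℝ)/2))
      ((2 * Real.cos φ ^ 1 * (-Real.sin φ)) * ((3:ℝ)/2) * (Real.cos φ ^ 2) ^ ((3:ℝ)/2 - 1)) φ :=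
    hc.rpow_const (Or.inr (by norm_num))
  have h2 : HasDerivAt (fun φ => Real.sin φ ^ 2) (2 * Real.sin φ ^ 1 * Real.cos φ) φ :=
    (Real.hasDerivAt_sin φ).pow 2
  have := (h1.div_const A).add (h2.div_const B)
  refine this.congr_deriv ?_
  have he : (Real.cos φ ^ 2) ^ ((3:ℝ)/2 - 1) = Real.sqrt (Real.cos φ ^ 2) := by
    rw [show ((3:ℝ)/2 - 1) = 1/2 by norm_num, ← Real.sqrt_eq_rpow]
  rw [he]
  unfold gielisH1
  ring

lemma gielis_hasDerivAt_H1 (A B φ : ℝ) : HasDerivAt (gielisH1 A B) (gielisH2 A B φ) φ := by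
  have hwc : HasDerivAt (fun φ => Real.cos φ * Real.sqrt (Real.cos φ ^ 2))
      (2 * Real.sqrt (Real.cos φ ^ 2) * (-Real.sin φ)) φ :=
    (gielis_hasDerivAt_w (Real.cos φ)).comp φ (Real.hasDerivAt_cos φ)
  have h1 := ((hwc.const_mul (-3)).mul (Real.hasDerivAt_sin φ)).div_const A
  have h2 := (((Real.hasDerivAt_sin φ).const_mul (2:ℝ)).mul (Real.hasDerivAt_cos φ)).div_const B
  have := h1.add h2
  refine this.congr_deriv ?_
  unfold gielisH2
  ring

lemma gielis_poly_pos {x t u : ℝ} (hx0 : 0 ≤ x) (hx1 : x ≤ 1) (ht : 0 < t) (hu : 0 < u) :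
    0 < (3 * x ^ 4 + 7 * x ^ 6) * t ^ 2 + (2 * x * (6 + 5 * x ^ 2 - 9 * x ^ 4)) * (t * u)
        + 12 * (1 - x ^ 2) ^ 2 * u ^ 2 := by
  rcases hx0.eq_or_lt with h0 | h0
  · rw [← h0]; norm_num; positivity
  · have hx2le : x ^ 2 ≤ 1 := by nlinarith
    have hcross : 0 < 6 + 5 * x ^ 2 - 9 * x ^ 4 := by
      nlinarith [mul_nonneg (sq_nonneg x) (sub_nonneg.mpr hx2le)]
    have t1 : 0 ≤ (3 * x ^ 4 + 7 * x ^ 6) * t ^ 2 := by positivity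
    have t3 : 0 ≤ 12 * (1 - x ^ 2) ^ 2 * u ^ 2 := by positivity
    have t2 : 0 < (2 * x * (6 + 5 * x ^ 2 - 9 * x ^ 4)) * (t * u) :=
      mul_pos (mul_pos (by positivity) hcross) (mul_pos ht hu)
    linarith

lemma gielis_key_pos {A B : ℝ} (hA : 0 < A) (hB : 0 < B) (φ : ℝ) :
    0 < 2 * gielisH2 A B φ * gielisH0 A B φ - (gielisH1 A B φ) ^ 2
        + 16 * (gielisH0 A B φ) ^ 2 := by
  set c := Real.cos φ with hc
  set s := Real.sin φ with hsdef
  set x := Real.sqrt (c ^ 2) with hx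
  have hx0 : 0 ≤ x := Real.sqrt_nonneg _
  have hx2 : x ^ 2 = c ^ 2 := Real.sq_sqrt (sq_nonneg c)
  have hs2 : s ^ 2 = 1 - x ^ 2 := by
    have := Real.sin_sq_add_cos_sq φ; rw [hx2]; linarith
  have hx1 : x ≤ 1 := by nlinarith
  have habs : (c ^ 2 : ℝ) ^ ((3:ℝ)/2) = x ^ 3 := by
    rw [gielis_sq_rpow_three_halves, hx, Real.sqrt_sq_eq_abs]
  have e0 : gielisH0 A B φ = x ^ 3 * A⁻¹ + (1 - x ^ 2) * B⁻¹ := by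
    unfold gielisH0; rw [habs, hs2]; ring
  have e1 : (gielisH1 A B φ) ^ 2 = x ^ 2 * (1 - x ^ 2) * (2 * B⁻¹ - 3 * x * A⁻¹) ^ 2 := by
    unfold gielisH1
    have : (-3 * (c * x) * s) / A + (2 * s * c) / B = s * c * (2 * B⁻¹ - 3 * x * A⁻¹) := by
      ring
    rw [this]
    have h' : (s * c) ^ 2 = x ^ 2 * (1 - x ^ 2) := by
      rw [mul_pow, hs2, ← hx2]; ring
    calc (s * c * (2 * B⁻¹ - 3 * x * A⁻¹)) ^ 2
        = (s * c) ^ 2 * (2 * B⁻¹ - 3 * x * A⁻¹) ^ 2 := by ring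
      _ = x ^ 2 * (1 - x ^ 2) * (2 * B⁻¹ - 3 * x * A⁻¹) ^ 2 := by rw [h']
  have e2 : gielisH2 A B φ = (6 * x - 9 * x ^ 3) * A⁻¹ + (4 * x ^ 2 - 2) * B⁻¹ := by
    unfold gielisH2
    rw [← hx, hs2, ← hx2]
    ring
  rw [e0, e1, e2]
  set t := A⁻¹ with ht
  set u := B⁻¹ with hu
  have htp : 0 < t := by positivity
  have hup : 0 < u := by positivity
  have hexp : 2 * ((6 * x - 9 * x ^ 3) * t + (4 * x ^ 2 - 2) * u) * (x ^ 3 * t + (1 - x ^ 2) * u)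
      - x ^ 2 * (1 - x ^ 2) * (2 * u - 3 * x * t) ^ 2
      + 16 * (x ^ 3 * t + (1 - x ^ 2) * u) ^ 2
      = (3 * x ^ 4 + 7 * x ^ 6) * t ^ 2 + (2 * x * (6 + 5 * x ^ 2 - 9 * x ^ 4)) * (t * u)
        + 12 * (1 - x ^ 2) ^ 2 * u ^ 2 := by ring
  rw [hexp]
  exact gielis_poly_pos hx0 hx1 htp hup

noncomputable def gielisU0 (A B θ : ℝ) : ℝ := Real.sqrt (gielisH0 A B (θ / 2))
noncomputable def gielisU1 (A B θ : ℝ) : ℝ := gielisH1 A B (θ / 2) / (4 * gielisU0 A B θ)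
noncomputable def gielisU2 (A B θ : ℝ) : ℝ :=
  (gielisH2 A B (θ / 2) / 2 * (4 * gielisU0 A B θ)
      - gielisH1 A B (θ / 2) * (4 * gielisU1 A B θ)) / (4 * gielisU0 A B θ) ^ 2

lemma gielisU0_pos {A B : ℝ} (hA : 0 < A) (hB : 0 < B) (θ : ℝ) : 0 < gielisU0 A B θ :=
  Real.sqrt_pos.mpr (gielisH0_pos hA hB _)

lemma gielis_hasDerivAt_U0 {A B : ℝ} (hA : 0 < A) (hB : 0 < B) (θ : ℝ) :
    HasDerivAt (gielisU0 A B) (gielisU1 A B θ) θ := by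
  have hhalf : HasDerivAt (fun θ : ℝ => θ / 2) (1 / 2) θ := by
    simpa using (hasDerivAt_id θ).div_const 2
  have hcomp : HasDerivAt (fun θ => gielisH0 A B (θ / 2)) (gielisH1 A B (θ / 2) * (1 / 2)) θ :=
    by have := (gielis_hasDerivAt_H0 A B (θ / 2)).comp θ hhalf; exact this
  have hne : gielisH0 A B (θ / 2) ≠ 0 := (gielisH0_pos hA hB _).ne'
  have := hcomp.sqrt hne
  refine this.congr_deriv ?_
  unfold gielisU1 gielisU0
  ring

lemma gielis_hasDerivAt_U1 {A B : ℝ} (hA : 0 < A) (hB : 0 < B) (θ : ℝ) :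
    HasDerivAt (gielisU1 A B) (gielisU2 A B θ) θ := by
  have hhalf : HasDerivAt (fun θ : ℝ => θ / 2) (1 / 2) θ := by
    simpa using (hasDerivAt_id θ).div_const 2
  have hN : HasDerivAt (fun θ => gielisH1 A B (θ / 2)) (gielisH2 A B (θ / 2) * (1 / 2)) θ :=
    by have := (gielis_hasDerivAt_H1 A B (θ / 2)).comp θ hhalf; exact this
  have hD : HasDerivAt (fun θ => 4 * gielisU0 A B θ) (4 * gielisU1 A B θ) θ :=
    (gielis_hasDerivAt_U0 hA hB θ).const_mul 4
  have hDne : 4 * gielisU0 A B θ ≠ 0 := by have := gielisU0_pos hA hB θ; positivity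
  have := hN.div hD hDne
  refine this.congr_deriv ?_
  unfold gielisU2
  ring

lemma gielis_u_second_pos {A B : ℝ} (hA : 0 < A) (hB : 0 < B) (θ : ℝ) :
    0 < gielisU2 A B θ + gielisU0 A B θ := by
  set S := gielisU0 A B θ with hS
  have hSpos : 0 < S := gielisU0_pos hA hB θ
  have hS2 : gielisH0 A B (θ / 2) = S ^ 2 := (Real.sq_sqrt (gielisH0_pos hA hB _).le).symm
  have hkey := gielis_key_pos hA hB (θ / 2)
  rw [hS2] at hkey
  have hU1 : gielisU1 A B θ = gielisH1 A B (θ / 2) / (4 * S) := rfl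
  have hexpr : gielisU2 A B θ + S
      = (2 * gielisH2 A B (θ / 2) * S ^ 2 - (gielisH1 A B (θ / 2)) ^ 2 + 16 * (S ^ 2) ^ 2)
        / (16 * S ^ 3) := by
    unfold gielisU2
    rw [hU1, ← hS]
    field_simp
    ring
  rw [hexpr]
  apply div_pos _ (by positivity)
  nlinarith [hkey]

end GielisAux

/-- With `h(φ) = |cos φ|³/|a|³ + sin²φ/b²` and `u(θ) = √(h(θ/2))`,
one has `u''(θ) + u(θ) > 0` for every `θ`; consequently the Gielis figure
`r = v(θ)` with `v = 1/u` is strongly convex, i.e.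
`2 v'(θ)² − v(θ) v''(θ) + v(θ)² > 0` for all `θ`, for all `a, b ∈ ℝ∖{0}`. -/
theorem gielis_strong_convexity (a b : ℝ) (ha : a ≠ 0) (hb : b ≠ 0)
    (h u v : ℝ → ℝ)
    (hh : ∀ φ, h φ = |Real.cos φ| ^ 3 / |a| ^ 3 + Real.sin φ ^ 2 / b ^ 2)
    (hu : ∀ θ, u θ = Real.sqrt (h (θ / 2)))
    (hv : ∀ θ, v θ = 1 / u θ) :
    (∀ θ : ℝ, 0 < deriv (deriv u) θ + u θ) ∧
      ∀ θ : ℝ, 0 < 2 * (deriv v θ) ^ 2 - v θ * deriv (deriv v) θ + (v θ) ^ 2 := by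
  have hA : (0:ℝ) < |a| ^ 3 := by positivity
  have hB : (0:ℝ) < b ^ 2 := by positivity
  set A := |a| ^ 3 with hAdef
  set B := b ^ 2 with hBdef
  have hufun : u = gielisU0 A B := by
    funext θ
    rw [hu, hh]
    unfold gielisU0 gielisH0
    rw [gielis_sq_rpow_three_halves]
  have hd1 : deriv u = gielisU1 A B := by
    rw [hufun]
    funext θ
    exact (gielis_hasDerivAt_U0 hA hB θ).deriv
  have hd2 : deriv (deriv u) = gielisU2 A B := by
    rw [hd1]
    funext θ
    exact (gielis_hasDerivAt_U1 hA hB θ).deriv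
  have hupos : ∀ θ, 0 < u θ := by
    intro θ; rw [hufun]; exact gielisU0_pos hA hB θ
  have part1 : ∀ θ : ℝ, 0 < deriv (deriv u) θ + u θ := by
    intro θ
    rw [hd2, hufun]
    exact gielis_u_second_pos hA hB θ
  refine ⟨part1, ?_⟩
  intro θ
  -- derivatives of v
  have hvfun : v = fun θ => 1 / gielisU0 A B θ := by
    funext θ; rw [hv, hufun]
  have hdv1 : ∀ θ, HasDerivAt v
      (-(gielisU1 A B θ) / (gielisU0 A B θ) ^ 2) θ := by
    intro θ
    rw [hvfun]
    have := (hasDerivAt_const θ (1:ℝ)).div (gielis_hasDerivAt_U0 hA hB θ)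
      (gielisU0_pos hA hB θ).ne'
    refine this.congr_deriv ?_
    ring
  have hdv : deriv v = fun θ => -(gielisU1 A B θ) / (gielisU0 A B θ) ^ 2 := by
    funext θ
    exact (hdv1 θ).deriv
  have hdv2 : HasDerivAt (fun θ => -(gielisU1 A B θ) / (gielisU0 A B θ) ^ 2)
      ((-(gielisU2 A B θ) * (gielisU0 A B θ) ^ 2
        - -(gielisU1 A B θ) * (2 * gielisU0 A B θ ^ 1 * gielisU1 A B θ))
        / ((gielisU0 A B θ) ^ 2) ^ 2) θ := by
    exact ((gielis_hasDerivAt_U1 hA hB θ).neg).div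
      ((gielis_hasDerivAt_U0 hA hB θ).pow 2) (by have := gielisU0_pos hA hB θ; positivity)
  have hddv : deriv (deriv v) θ
      = (-(gielisU2 A B θ) * (gielisU0 A B θ) ^ 2
        - -(gielisU1 A B θ) * (2 * gielisU0 A B θ ^ 1 * gielisU1 A B θ))
        / ((gielisU0 A B θ) ^ 2) ^ 2 := by
    rw [hdv]
    exact hdv2.deriv
  rw [hddv, hdv, hvfun]
  set S := gielisU0 A B θ with hSdef
  set P := gielisU1 A B θ with hPdef
  set Q := gielisU2 A B θ with hQdef
  have hSpos : 0 < S := gielisU0_pos hA hB θ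
  have hSne : S ≠ 0 := hSpos.ne'
  have hfinal : 2 * (-P / S ^ 2) ^ 2
      - (1 / S) * ((-Q * S ^ 2 - -P * (2 * S ^ 1 * P)) / (S ^ 2) ^ 2) + (1 / S) ^ 2
      = (Q + S) / S ^ 3 := by
    field_simp
    ring
  rw [hfinal]
  exact div_pos (gielis_u_second_pos hA hB θ) (by positivity)
end
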